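/- arXiv:1709.00564 — 2 statements merged into one kernel-verified Lean document; each statement's English description precedes it below -/
import Mathlib

section
/- Let T be a woven based matrix over an abelian group H, and suppose T_2 is obtained from T by applying an elementary extension M_i, then a finite sequence N of intersection moves, then an inverse elementary extension M_j^{-1}. Then T_2 can be obtained from T by a sequence N_3∘M_j^{-1}∘N_2∘M_i∘N_1 where N_1, N_2, N_3 are finite sequences of intersection moves, N_2 is reduced, and every intersection move in N_2 affects both an element added by M_i and an element removed by M_j^{-1}. Furthermore, if exactly one of i,j equals 4, then N_2 contains at most 2 intersection moves acting on each non-intersection element added by M_i (respectively removed by M_j^{-1}), and if i = j = 4 then N_2 contains at most two moves acting on each element g ∈ G. -/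
universe u v

/-- A woven based matrix over an abelian group `H`: parts `G 1, …, G n` with base
elements `s i ∈ G i`, a weaving set `I`, and a skew-symmetric pairing `b` which is a
weaving map on `(G ∪ I) × I`. -/
structure WovenBasedMatrix (α : Type u) (H : Type v) [DecidableEq α] [AddCommGroup H]
    (n : ℕ) where
  G : Fin n → Finset α
  I : Finset α
  s : Fin n → α
  b : α → α → H
  s_mem : ∀ i, s i ∈ G i
  disjointG : ∀ i j, i ≠ j → Disjoint (G i) (G j)
  disjointI : ∀ i, Disjoint (G i) I
  skew : ∀ a ∈ Finset.univ.biUnion G ∪ I, ∀ a' ∈ Finset.univ.biUnion G ∪ I,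
    b a a' = - b a' a
  diag : ∀ a ∈ Finset.univ.biUnion G ∪ I, b a a = 0
  inter_zero : ∀ x ∈ I, ∀ y ∈ I, b x y = 0
  weave_two : ∀ x ∈ I, ∃ i j : Fin n, i ≠ j ∧ b (s i) x ≠ 0 ∧ b (s j) x ≠ 0 ∧
    b (s i) x = - b (s j) x ∧ ∀ k : Fin n, b (s k) x ≠ 0 → k = i ∨ k = j
  weave_val : ∀ i : Fin n, ∀ g ∈ G i, ∀ x ∈ I, b g x = 0 ∨ b g x = b (s i) x

variable {α : Type u} {H : Type v} [DecidableEq α] [AddCommGroup H] {n : ℕ}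

/-- The underlying set `G ∪ I` of a woven based matrix. -/
def WovenBasedMatrix.carrier (T : WovenBasedMatrix α H n) : Finset α :=
  Finset.univ.biUnion T.G ∪ T.I

/-- The effect of the intersection move `I_□(g; x₁, x₂)` on the skew-symmetric map `b`,
where `sj` is the base element of the part containing `g`:
`b' g xₖ = b sj xₖ - b g xₖ` for `k = 1,2` (and symmetrically), `b' = b` elsewhere. -/
def IMap (b : α → α → H) (sj g x1 x2 : α) : α → α → H := fun a a' =>
  if a = g ∧ (a' = x1 ∨ a' = x2) then b sj a' - b a a'
  else if a' = g ∧ (a = x1 ∨ a = x2) then b a sj - b a a'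
  else b a a'

/-- `x₁, x₂` are a `g`-annihilating pair (with `sj` the base element of `g`'s part). -/
def IsGAnn (b : α → α → H) (sj g x1 x2 : α) : Prop :=
  b g x1 + b g x2 = 0 ∧ b sj x1 + b sj x2 = 0

/-- `x₁, x₂` are a `g`-unequal pair (with `sj` the base element of `g`'s part). -/
def IsGUnequal (b : α → α → H) (sj g x1 x2 : α) : Prop :=
  b g x1 ≠ b g x2 ∧ b sj x1 = b sj x2

/-- `MoveApplicable k b sj g x1 x2`: the intersection move `I_{k+1}(g;x₁,x₂)` is applicable to
the matrix `b`.  Here `k = 0` encodes the move `I₁` (needing a `g`-annihilating pair) and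
`k = 1` encodes the move `I₂` (needing a `g`-unequal pair). -/
def MoveApplicable (k : Fin 2) (b : α → α → H) (sj g x1 x2 : α) : Prop :=
  if k = 0 then IsGAnn b sj g x1 x2 else IsGUnequal b sj g x1 x2

/-- The data of an intersection move `I_{sq+1}(g; x₁, x₂)` with `g` in the part `G j`. -/
structure MoveDatum (α : Type u) (n : ℕ) where
  j : Fin n
  sq : Fin 2
  g : α
  x1 : α
  x2 : α

/-- The move datum refers to an element `g ∈ G j \ {s j}` and a pair of distinct
elements of the weaving set `I`. -/
def MoveDatum.valid (m : MoveDatum α n) (T : WovenBasedMatrix α H n) : Prop :=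
  m.g ∈ T.G m.j ∧ m.g ≠ T.s m.j ∧ m.x1 ∈ T.I ∧ m.x2 ∈ T.I ∧ m.x1 ≠ m.x2

/-- Apply a finite sequence of intersection moves (listed in order of application)
to the skew-symmetric map `b`. -/
def applyMoves (s : Fin n → α) : List (MoveDatum α n) → (α → α → H) → (α → α → H)
  | [], b => b
  | m :: ms, b => applyMoves s ms (IMap b (s m.j) m.g m.x1 m.x2)

/-- A finite sequence of intersection moves is applicable to `b`: each move in turn is
applicable to the result of the previous ones. -/
def movesApplicable (s : Fin n → α) : List (MoveDatum α n) → (α → α → H) → Prop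
  | [], _ => True
  | m :: ms, b => MoveApplicable m.sq b (s m.j) m.g m.x1 m.x2 ∧
      movesApplicable s ms (IMap b (s m.j) m.g m.x1 m.x2)

/-- A sequence of intersection moves is reduced if it splits into consecutive blocks,
each block acting on a single element `g` of `G`, with pairwise distinct elements `g`
across blocks, and within each block every element of the weaving set appears in at
most one move. -/
def ReducedMoves (L : List (MoveDatum α n)) : Prop :=
  ∃ Bs : List (List (MoveDatum α n)),
    L = Bs.flatten ∧
    (∀ B ∈ Bs, ∀ m ∈ B, ∀ m' ∈ B, m.g = m'.g) ∧
    Bs.Pairwise (fun B B' => ∀ m ∈ B, ∀ m' ∈ B', m.g ≠ m'.g) ∧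
    (∀ B ∈ Bs, ∀ x : α, (B.countP fun m => decide (m.x1 = x ∨ m.x2 = x)) ≤ 1)

/-- `M_{1,j}`: elementary extension adding a `G j`-annihilating element `g`. -/
def ExtRel1 (T T' : WovenBasedMatrix α H n) : Prop :=
  ∃ (j : Fin n) (g : α), g ∉ T.carrier ∧
    T'.s = T.s ∧ T'.I = T.I ∧ T'.G j = insert g (T.G j) ∧
    (∀ i : Fin n, i ≠ j → T'.G i = T.G i) ∧
    (∀ a ∈ T.carrier, ∀ a' ∈ T.carrier, T'.b a a' = T.b a a') ∧
    (∀ a ∈ T'.carrier, T'.b g a = 0)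

/-- `M_{2,j}`: elementary extension adding a `G j`-core element `g`. -/
def ExtRel2 (T T' : WovenBasedMatrix α H n) : Prop :=
  ∃ (j : Fin n) (g : α), g ∉ T.carrier ∧
    T'.s = T.s ∧ T'.I = T.I ∧ T'.G j = insert g (T.G j) ∧
    (∀ i : Fin n, i ≠ j → T'.G i = T.G i) ∧
    (∀ a ∈ T.carrier, ∀ a' ∈ T.carrier, T'.b a a' = T.b a a') ∧
    (∀ a ∈ T'.carrier, T'.b g a = T'.b (T'.s j) a)

/-- `M_{3,j}`: elementary extension adding a `G j`-complementary pair `g₁, g₂`. -/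
def ExtRel3 (T T' : WovenBasedMatrix α H n) : Prop :=
  ∃ (j : Fin n) (g1 g2 : α), g1 ≠ g2 ∧ g1 ∉ T.carrier ∧ g2 ∉ T.carrier ∧
    T'.s = T.s ∧ T'.I = T.I ∧ T'.G j = insert g1 (insert g2 (T.G j)) ∧
    (∀ i : Fin n, i ≠ j → T'.G i = T.G i) ∧
    (∀ a ∈ T.carrier, ∀ a' ∈ T.carrier, T'.b a a' = T.b a a') ∧
    (∀ a ∈ T'.carrier, T'.b g1 a + T'.b g2 a = T'.b (T'.s j) a)

/-- `M₄`: elementary extension adding a sum-annihilating pair `x₁, x₂` to the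
weaving set. -/
def ExtRel4 (T T' : WovenBasedMatrix α H n) : Prop :=
  ∃ (x1 x2 : α), x1 ≠ x2 ∧ x1 ∉ T.carrier ∧ x2 ∉ T.carrier ∧
    T'.s = T.s ∧ T'.G = T.G ∧ T'.I = insert x1 (insert x2 T.I) ∧
    (∀ a ∈ T.carrier, ∀ a' ∈ T.carrier, T'.b a a' = T.b a a') ∧
    (∀ a ∈ T'.carrier, T'.b x1 a + T'.b x2 a = 0)

/-- `T'` is obtained from `T` by a single elementary extension; the inverse elementary
extensions are given by the reversed relation. -/
def ExtRel (T T' : WovenBasedMatrix α H n) : Prop :=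
  ExtRel1 T T' ∨ ExtRel2 T T' ∨ ExtRel3 T T' ∨ ExtRel4 T T'

/-- `T'` is obtained from `T` by the elementary extension `M_k` (`k ∈ {1,2,3,4}`). -/
def ExtRelAt (k : ℕ) (T T' : WovenBasedMatrix α H n) : Prop :=
  match k with
  | 1 => ExtRel1 T T'
  | 2 => ExtRel2 T T'
  | 3 => ExtRel3 T T'
  | 4 => ExtRel4 T T'
  | _ => False

/-- Isomorphism of woven based matrices: a bijection of the underlying sets together with
a permutation of the indices, matching base elements, parts, weaving sets and pairings. -/
def IsoRel (T T' : WovenBasedMatrix α H n) : Prop :=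
  ∃ (Φ : α → α) (σ : Equiv.Perm (Fin n)),
    Set.BijOn Φ ↑T.carrier ↑T'.carrier ∧
    (∀ i, Φ (T.s i) = T'.s (σ i)) ∧
    (∀ i, (T.G i).image Φ = T'.G (σ i)) ∧
    T.I.image Φ = T'.I ∧
    (∀ a ∈ T.carrier, ∀ a' ∈ T.carrier, T'.b (Φ a) (Φ a') = T.b a a')

/-- `T'` is obtained from `T` by a single intersection move. -/
def IMoveRel (T T' : WovenBasedMatrix α H n) : Prop :=
  ∃ m : MoveDatum α n, m.valid T ∧
    MoveApplicable m.sq T.b (T.s m.j) m.g m.x1 m.x2 ∧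
    T'.G = T.G ∧ T'.I = T.I ∧ T'.s = T.s ∧
    (∀ a ∈ T.carrier, ∀ a' ∈ T.carrier,
      T'.b a a' = IMap T.b (T.s m.j) m.g m.x1 m.x2 a a')

/-- `T` and `T'` are equal woven based matrices (same parts, base elements, weaving set
and the same pairing on the underlying set). -/
def WBMEq (T T' : WovenBasedMatrix α H n) : Prop :=
  T'.G = T.G ∧ T'.I = T.I ∧ T'.s = T.s ∧
  ∀ a ∈ T.carrier, ∀ a' ∈ T.carrier, T'.b a a' = T.b a a'

/-- One step of the homology relation: an elementary extension, an inverse elementary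
extension, an intersection move, or an isomorphism. -/
def HomStep (T T' : WovenBasedMatrix α H n) : Prop :=
  ExtRel T T' ∨ ExtRel T' T ∨ IMoveRel T T' ∨ IsoRel T T'

/-- Two woven based matrices are homologous if they are related by a finite sequence of
elementary extensions and their inverses, intersection moves, and isomorphisms. -/
def Homologous : WovenBasedMatrix α H n → WovenBasedMatrix α H n → Prop :=
  Relation.ReflTransGen HomStep

/-- No inverse elementary extension applies to `T`: there is no `G i`-annihilating
element, no `G i`-core element, no `G i`-complementary pair, and no sum-annihilating
pair in the weaving set. -/
def NoInverseExtension (T : WovenBasedMatrix α H n) : Prop :=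
  (∀ i : Fin n, ∀ g ∈ T.G i, g ≠ T.s i → ¬ (∀ a ∈ T.carrier, T.b g a = 0)) ∧
  (∀ i : Fin n, ∀ g ∈ T.G i, g ≠ T.s i →
    ¬ (∀ a ∈ T.carrier, T.b g a = T.b (T.s i) a)) ∧
  (∀ i : Fin n, ∀ g1 ∈ T.G i, ∀ g2 ∈ T.G i, g1 ≠ T.s i → g2 ≠ T.s i → g1 ≠ g2 →
    ¬ (∀ a ∈ T.carrier, T.b g1 a + T.b g2 a = T.b (T.s i) a)) ∧
  (∀ x1 ∈ T.I, ∀ x2 ∈ T.I, x1 ≠ x2 → ¬ (∀ a ∈ T.carrier, T.b x1 a + T.b x2 a = 0))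

/-- A woven based matrix is primitive if after every finite sequence of intersection
moves, no inverse elementary extension can be applied. -/
def Primitive (T : WovenBasedMatrix α H n) : Prop :=
  ∀ T' : WovenBasedMatrix α H n, Relation.ReflTransGen IMoveRel T T' →
    NoInverseExtension T'


namespace MBEI
open Classical

/-! ### flips: functional description of the effect of families of moves -/

def flips (sOf : α → α) (D : α → Finset α) (b : α → α → H) : α → α → H := fun a a' =>
  if a' ∈ D a then b (sOf a) a' - b a a'
  else if a ∈ D a' then b a (sOf a') - b a a'
  else b a a'

structure DOk (sOf : α → α) (D : α → Finset α) (GS IS : Finset α) : Prop where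
  mem : ∀ g x, x ∈ D g → g ∈ GS ∧ x ∈ IS
  sNot : ∀ g, (D g).Nonempty → sOf g ∉ GS ∧ sOf g ∉ IS
  disj : ∀ a, a ∈ GS → a ∉ IS

lemma flips_of_not {sOf : α → α} {D : α → Finset α} {b : α → α → H} {a a' : α}
    (h1 : a' ∉ D a) (h2 : a ∉ D a') : flips sOf D b a a' = b a a' := by
  simp [flips, h1, h2]

lemma flips_pos1 {sOf : α → α} {D : α → Finset α} {b : α → α → H} {a a' : α}
    (h : a' ∈ D a) : flips sOf D b a a' = b (sOf a) a' - b a a' := if_pos h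

lemma flips_pos2 {sOf : α → α} {D : α → Finset α} {b : α → α → H} {a a' : α}
    (h1 : a' ∉ D a) (h : a ∈ D a') : flips sOf D b a a' = b a (sOf a') - b a a' := by
  simp [flips, h1, h]

lemma flips_comp {sOf : α → α} {D1 D2 : α → Finset α} {GS IS : Finset α}
    (h1 : DOk sOf D1 GS IS) (h2 : DOk sOf D2 GS IS)
    (hd : ∀ g x, x ∈ D1 g → x ∉ D2 g) (b : α → α → H) :
    flips sOf D2 (flips sOf D1 b) = flips sOf (fun g => D1 g ∪ D2 g) b := by
  funext a a'
  by_cases ha2 : a' ∈ D2 a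
  · have hmem := h2.mem a a' ha2
    have hs := h2.sNot a ⟨a', ha2⟩
    have e1 : flips sOf D1 b (sOf a) a' = b (sOf a) a' := by
      apply flips_of_not
      · intro h; exact hs.1 (h1.mem _ _ h).1
      · intro h; exact h1.disj a' (h1.mem _ _ h).1 hmem.2
    have e2 : flips sOf D1 b a a' = b a a' := by
      apply flips_of_not
      · intro h; exact hd _ _ h ha2
      · intro h; exact h1.disj a' (h1.mem _ _ h).1 hmem.2
    rw [flips_pos1 ha2, e1, e2,
      flips_pos1 (show a' ∈ D1 a ∪ D2 a from Finset.mem_union_right _ ha2)]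
  · by_cases ha2' : a ∈ D2 a'
    · have hmem := h2.mem a' a ha2'
      have hs := h2.sNot a' ⟨a, ha2'⟩
      have e1 : flips sOf D1 b a (sOf a') = b a (sOf a') := by
        apply flips_of_not
        · intro h; exact h1.disj a (h1.mem _ _ h).1 hmem.2
        · intro h; exact hs.1 (h1.mem _ _ h).1
      have e2 : flips sOf D1 b a a' = b a a' := by
        apply flips_of_not
        · intro h; exact h1.disj a (h1.mem _ _ h).1 hmem.2
        · intro h; exact hd _ _ h ha2'
      have hnd1 : a' ∉ D1 a := by
        intro h; exact h1.disj a (h1.mem _ _ h).1 hmem.2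
      rw [flips_pos2 ha2 ha2', e2,
        flips_pos2 (D := fun g => D1 g ∪ D2 g) (show a' ∉ D1 a ∪ D2 a by simp [hnd1, ha2])
          (Finset.mem_union_right _ ha2'), e1]
    · by_cases ha1 : a' ∈ D1 a
      · have hmem := h1.mem a a' ha1
        rw [flips_of_not ha2 ha2', flips_pos1 ha1,
          flips_pos1 (Finset.mem_union_left _ ha1)]
      · by_cases ha1' : a ∈ D1 a'
        · rw [flips_of_not ha2 ha2', flips_pos2 ha1 ha1',
            flips_pos2 (D := fun g => D1 g ∪ D2 g) (show a' ∉ D1 a ∪ D2 a by simp [ha1, ha2])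
              (Finset.mem_union_left _ ha1')]
        · rw [flips_of_not ha2 ha2', flips_of_not ha1 ha1',
            flips_of_not (show a' ∉ D1 a ∪ D2 a by simp [ha1, ha2])
              (show a ∉ D1 a' ∪ D2 a' by simp [ha1', ha2'])]

/-! ### lists of moves as flips -/

def DofL (L : List (MoveDatum α n)) : α → Finset α :=
  fun g => ((L.filter (fun m => m.g = g)).flatMap (fun m => [m.x1, m.x2])).toFinset

lemma mem_DofL {L : List (MoveDatum α n)} {g x : α} :
    x ∈ DofL L g ↔ ∃ m ∈ L, m.g = g ∧ (x = m.x1 ∨ x = m.x2) := by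
  simp only [DofL, List.mem_toFinset, List.mem_flatMap, List.mem_filter,
    List.mem_cons, List.mem_singleton, List.not_mem_nil, or_false, decide_eq_true_eq]
  constructor
  · rintro ⟨m, ⟨hm, hg⟩, hx⟩; exact ⟨m, hm, hg, hx⟩
  · rintro ⟨m, hm, hg, hx⟩; exact ⟨m, ⟨hm, hg⟩, hx⟩

structure LOk (sfun : Fin n → α) (sOf : α → α) (GS IS : Finset α)
    (L : List (MoveDatum α n)) : Prop where
  types : ∀ m ∈ L, m.g ∈ GS ∧ m.x1 ∈ IS ∧ m.x2 ∈ IS ∧ m.x1 ≠ m.x2 ∧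
    sOf m.g = sfun m.j ∧ sfun m.j ∉ GS ∧ sfun m.j ∉ IS
  disj : ∀ a, a ∈ GS → a ∉ IS
  pw : L.Pairwise (fun m m' => m.g = m'.g →
    m.x1 ≠ m'.x1 ∧ m.x1 ≠ m'.x2 ∧ m.x2 ≠ m'.x1 ∧ m.x2 ≠ m'.x2)

lemma LOk.tail {sfun : Fin n → α} {sOf : α → α} {GS IS : Finset α}
    {m : MoveDatum α n} {L : List (MoveDatum α n)}
    (h : LOk sfun sOf GS IS (m :: L)) : LOk sfun sOf GS IS L :=
  ⟨fun m' hm' => h.types m' (List.mem_cons_of_mem _ hm'), h.disj, h.pw.of_cons⟩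

lemma LOk_DOk {sfun : Fin n → α} {sOf : α → α} {GS IS : Finset α}
    {L : List (MoveDatum α n)} (h : LOk sfun sOf GS IS L) :
    DOk sOf (DofL L) GS IS := by
  constructor
  · intro g x hx
    rcases mem_DofL.1 hx with ⟨m, hm, hg, hx'⟩
    rcases h.types m hm with ⟨h1, h2, h3, _⟩
    subst hg
    exact ⟨h1, by rcases hx' with h | h <;> subst h <;> assumption⟩
  · intro g ⟨x, hx⟩
    rcases mem_DofL.1 hx with ⟨m, hm, hg, _⟩
    rcases h.types m hm with ⟨_, _, _, _, h5, h6, h7⟩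
    subst hg; rw [h5]; exact ⟨h6, h7⟩
  · exact h.disj

lemma IMap_eq_flips {b : α → α → H} {sj g x1 x2 : α} {sOf : α → α}
    (hs : sOf g = sj) :
    IMap b sj g x1 x2 =
      flips sOf (fun a => if a = g then {x1, x2} else ∅) b := by
  have hmem : ∀ u v : α, (v ∈ (if u = g then ({x1, x2} : Finset α) else ∅)) ↔
      (u = g ∧ (v = x1 ∨ v = x2)) := by
    intro u v; by_cases h : u = g <;> simp [h]
  funext a a'
  simp only [IMap, flips, hmem]
  by_cases h1 : a = g ∧ (a' = x1 ∨ a' = x2)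
  · rw [if_pos h1, if_pos h1, h1.1, hs]
  · rw [if_neg h1, if_neg h1]
    by_cases h2 : a' = g ∧ (a = x1 ∨ a = x2)
    · rw [if_pos h2, if_pos h2, h2.1, hs]
    · rw [if_neg h2, if_neg h2]

lemma DofL_cons (m : MoveDatum α n) (L : List (MoveDatum α n)) :
    DofL (m :: L) = fun g =>
      (if g = m.g then ({m.x1, m.x2} : Finset α) else ∅) ∪ DofL L g := by
  funext g
  ext x
  simp only [Finset.mem_union, mem_DofL]
  constructor
  · rintro ⟨m', hm', hg, hx⟩
    rcases List.mem_cons.1 hm' with h | h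
    · subst h; left; rw [if_pos hg.symm]
      simp only [Finset.mem_insert, Finset.mem_singleton]; exact hx
    · exact Or.inr ⟨m', h, hg, hx⟩
  · rintro (h | ⟨m', hm', hg, hx⟩)
    · by_cases hg : g = m.g
      · rw [if_pos hg] at h
        simp only [Finset.mem_insert, Finset.mem_singleton] at h
        exact ⟨m, List.mem_cons_self, hg.symm, h⟩
      · rw [if_neg hg] at h; simp at h
    · exact ⟨m', List.mem_cons_of_mem _ hm', hg, hx⟩

lemma applyMoves_eq_flips {sfun : Fin n → α} {sOf : α → α} {GS IS : Finset α} :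
    ∀ (L : List (MoveDatum α n)), LOk sfun sOf GS IS L → ∀ (b : α → α → H),
    applyMoves sfun L b = flips sOf (DofL L) b := by
  intro L
  induction L with
  | nil =>
    intro _ b; funext a a'
    simp [applyMoves, flips, DofL]
  | cons m L ih =>
    intro hOk b
    rcases hOk.types m (List.mem_cons_self) with ⟨hg, hx1, hx2, hne, hsOf, hs1, hs2⟩
    have hDm : DOk sOf (fun a => if a = m.g then ({m.x1, m.x2} : Finset α) else ∅) GS IS := by
      constructor
      · intro g x hx
        by_cases h : g = m.g
        · rw [if_pos h] at hx
          simp only [Finset.mem_insert, Finset.mem_singleton] at hx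
          subst h
          exact ⟨hg, by rcases hx with h | h <;> subst h <;> assumption⟩
        · rw [if_neg h] at hx; simp at hx
      · intro g hne'
        by_cases h : g = m.g
        · subst h; rw [hsOf]; exact ⟨hs1, hs2⟩
        · rw [if_neg h] at hne'; simp [Finset.Nonempty] at hne'
      · exact hOk.disj
    have hDL : DOk sOf (DofL L) GS IS := LOk_DOk hOk.tail
    have hdisj : ∀ g x, x ∈ (if g = m.g then ({m.x1, m.x2} : Finset α) else ∅) →
        x ∉ DofL L g := by
      intro g x hx hx'
      by_cases h : g = m.g
      · rw [if_pos h] at hx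
        simp only [Finset.mem_insert, Finset.mem_singleton] at hx
        rcases mem_DofL.1 hx' with ⟨m', hm', hg', hx''⟩
        have := (List.pairwise_cons.1 hOk.pw).1 m' hm' (by rw [h] at hg'; exact hg'.symm)
        rcases hx with h1 | h1 <;> rcases hx'' with h2 | h2 <;>
          (subst h1; tauto)
      · rw [if_neg h] at hx; simp at hx
    show applyMoves sfun L (IMap b (sfun m.j) m.g m.x1 m.x2) = _
    rw [ih hOk.tail, IMap_eq_flips hsOf, flips_comp hDm hDL hdisj, DofL_cons]

lemma applyMoves_untouched {sfun : Fin n → α} :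
    ∀ (L : List (MoveDatum α n)) (b : α → α → H) (a a' : α),
    (∀ m ∈ L, ¬(a = m.g ∧ (a' = m.x1 ∨ a' = m.x2)) ∧
      ¬(a' = m.g ∧ (a = m.x1 ∨ a = m.x2))) →
    applyMoves sfun L b a a' = b a a' := by
  intro L
  induction L with
  | nil => intro b a a' _; rfl
  | cons m L ih =>
    intro b a a' h
    show applyMoves sfun L (IMap b (sfun m.j) m.g m.x1 m.x2) a a' = b a a'
    rw [ih _ _ _ (fun m' hm' => h m' (List.mem_cons_of_mem _ hm'))]
    rcases h m (List.mem_cons_self) with ⟨h1, h2⟩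
    simp [IMap, h1, h2]

lemma movesApplicable_of_base {sfun : Fin n → α} :
    ∀ (L : List (MoveDatum α n)) (b b₀ : α → α → H),
    (∀ m ∈ L, b m.g m.x1 = b₀ m.g m.x1 ∧ b m.g m.x2 = b₀ m.g m.x2 ∧
      b (sfun m.j) m.x1 = b₀ (sfun m.j) m.x1 ∧ b (sfun m.j) m.x2 = b₀ (sfun m.j) m.x2) →
    (∀ m ∈ L, MoveApplicable m.sq b₀ (sfun m.j) m.g m.x1 m.x2) →
    (L.Pairwise (fun m m' => m.g = m'.g →
      m.x1 ≠ m'.x1 ∧ m.x1 ≠ m'.x2 ∧ m.x2 ≠ m'.x1 ∧ m.x2 ≠ m'.x2)) →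
    (∀ m ∈ L, ∀ m' ∈ L, m.g ≠ m'.x1 ∧ m.g ≠ m'.x2 ∧ sfun m'.j ≠ m.g ∧
      sfun m'.j ≠ m.x1 ∧ sfun m'.j ≠ m.x2) →
    movesApplicable sfun L b := by
  intro L
  induction L with
  | nil => intro _ _ _ _ _ _; trivial
  | cons m L ih =>
    intro b b₀ hpos happ hpw htypes
    have hm := List.mem_cons_self (a := m) (l := L)
    constructor
    · rcases hpos m hm with ⟨e1, e2, e3, e4⟩
      have happm := happ m hm
      unfold MoveApplicable IsGAnn IsGUnequal at happm ⊢
      split_ifs at happm ⊢ <;> rw [e1, e2, e3, e4] <;> exact happm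
    · apply ih _ b₀ _ (fun m' hm' => happ m' (List.mem_cons_of_mem _ hm')) hpw.of_cons
        (fun m1 h1 m2 h2 => htypes m1 (List.mem_cons_of_mem _ h1) m2
          (List.mem_cons_of_mem _ h2))
      intro m' hm'
      have hL := List.mem_cons_of_mem m hm'
      have hd := (List.pairwise_cons.1 hpw).1 m' hm'
      have ht1 := htypes m' hL m hm
      have ht2 := htypes m hm m' hL
      have ht3 := htypes m' hL m' hL
      have hval : ∀ u v, (u = m'.g ∨ u = sfun m'.j) → (v = m'.x1 ∨ v = m'.x2) →
          IMap b (sfun m.j) m.g m.x1 m.x2 u v = b u v := by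
        intro u v hu hv
        have c1 : ¬(u = m.g ∧ (v = m.x1 ∨ v = m.x2)) := by
          rintro ⟨h1, h2⟩
          rcases hu with hu | hu
          · have hgg : m.g = m'.g := by rw [← h1, hu]
            have := hd hgg
            rcases hv with hv | hv <;> rcases h2 with h2 | h2 <;>
              · rw [hv] at h2; tauto
          · exact ht2.2.2.1 (by rw [← hu]; exact h1)
        have c2 : ¬(v = m.g ∧ (u = m.x1 ∨ u = m.x2)) := by
          rintro ⟨h1, _⟩
          rcases hv with hv | hv
          · exact ht2.1 (by rw [← h1]; exact hv)
          · exact ht2.2.1 (by rw [← h1]; exact hv)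
        simp [IMap, c1, c2]
      rcases hpos m' hL with ⟨e1, e2, e3, e4⟩
      exact ⟨(hval _ _ (Or.inl rfl) (Or.inl rfl)).trans e1,
        (hval _ _ (Or.inl rfl) (Or.inr rfl)).trans e2,
        (hval _ _ (Or.inr rfl) (Or.inl rfl)).trans e3,
        (hval _ _ (Or.inr rfl) (Or.inr rfl)).trans e4⟩



/-- indicator count -/
noncomputable def cntQ (σ r : α → H) (S : Finset α) (c : H) : ℤ :=
  ∑ x ∈ S, (if σ x = c ∧ r x = c then (1:ℤ) else 0)

/-- classical indicator -/
noncomputable def ind (P : Prop) : ℤ := if P then 1 else 0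

lemma ind_def (P : Prop) : ind P = if P then 1 else 0 := rfl

def Compat (σ r0 : α → H) (x y : α) : Prop :=
  (σ x + σ y = 0 ∧ r0 x + r0 y = 0) ∨ (σ x = σ y ∧ r0 x ≠ r0 y)

lemma cntQ_congr {σ r r' : α → H} {S : Finset α} (h : ∀ x ∈ S, r x = r' x) (c : H) :
    cntQ σ r S c = cntQ σ r' S c := by
  unfold cntQ
  apply Finset.sum_congr rfl
  intro x hx
  rw [h x hx]

lemma Qstep (σ r r' : α → H) (S : Finset α) (x1 x2 : α)
    (h1 : x1 ∈ S) (h2 : x2 ∈ S) (hne : x1 ≠ x2)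
    (hv : ∀ x ∈ S, r x = 0 ∨ r x = σ x)
    (happ : (r x1 + r x2 = 0 ∧ σ x1 + σ x2 = 0) ∨ (r x1 ≠ r x2 ∧ σ x1 = σ x2))
    (hr' : ∀ x ∈ S, r' x = if x = x1 ∨ x = x2 then σ x - r x else r x) :
    (∀ x ∈ S, r' x = 0 ∨ r' x = σ x) ∧
    (∀ c : H, c ≠ 0 →
      cntQ σ r' S c - cntQ σ r' S (-c) = cntQ σ r S c - cntQ σ r S (-c)) ∧
    (∀ c : H, c ≠ 0 → c + c = 0 → (2:ℤ) ∣ (cntQ σ r' S c - cntQ σ r S c)) := by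
  have hf1 : r' x1 = σ x1 - r x1 := by rw [hr' x1 h1, if_pos (Or.inl rfl)]
  have hf2 : r' x2 = σ x2 - r x2 := by rw [hr' x2 h2, if_pos (Or.inr rfl)]
  have hval : ∀ x ∈ S, r' x = 0 ∨ r' x = σ x := by
    intro x hx
    rw [hr' x hx]
    by_cases h : x = x1 ∨ x = x2
    · rw [if_pos h]
      rcases hv x hx with h' | h'
      · right; rw [h', sub_zero]
      · left; rw [h', sub_self]
    · rw [if_neg h]; exact hv x hx
  refine ⟨hval, ?_⟩
  have hkey : ∀ c : H, cntQ σ r' S c - cntQ σ r S c =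
      ((if σ x1 = c ∧ r' x1 = c then (1:ℤ) else 0) -
        (if σ x1 = c ∧ r x1 = c then (1:ℤ) else 0)) +
      ((if σ x2 = c ∧ r' x2 = c then (1:ℤ) else 0) -
        (if σ x2 = c ∧ r x2 = c then (1:ℤ) else 0)) := by
    intro c
    unfold cntQ
    rw [← Finset.sum_sub_distrib]
    rw [show (∑ x ∈ S, ((if σ x = c ∧ r' x = c then (1:ℤ) else 0) -
        (if σ x = c ∧ r x = c then (1:ℤ) else 0))) =
        ∑ x ∈ ({x1, x2} : Finset α),
          ((if σ x = c ∧ r' x = c then (1:ℤ) else 0) -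
            (if σ x = c ∧ r x = c then (1:ℤ) else 0)) from
      (Finset.sum_subset (by
        intro z hz
        simp only [Finset.mem_insert, Finset.mem_singleton] at hz
        rcases hz with h | h <;> [rw [h]; rw [h]] <;> assumption) (by
        intro z hz hz'
        simp only [Finset.mem_insert, Finset.mem_singleton] at hz'
        rw [hr' z hz, if_neg hz', sub_self])).symm]
    rw [Finset.sum_pair hne]
  rcases happ with ⟨hvv, hσ⟩ | ⟨hvne, hσ⟩
  · -- I₁ move
    have hσ2 : σ x2 = -σ x1 := eq_neg_of_add_eq_zero_right hσ
    have hcases : (r x1 = 0 ∧ r x2 = 0) ∨ (r x1 = σ x1 ∧ r x2 = σ x2) := by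
      rcases hv x1 h1 with h | h
      · left; refine ⟨h, ?_⟩; rwa [h, zero_add] at hvv
      · right; refine ⟨h, ?_⟩
        have : r x2 = -r x1 := eq_neg_of_add_eq_zero_right hvv
        rw [this, h, hσ2]
    rcases hcases with ⟨e1, e2⟩ | ⟨e1, e2⟩
    · constructor
      · intro c hc
        have z1 : ¬(0:H) = c := fun h => hc h.symm
        have z2 : ¬(0:H) = -c := fun h => hc (neg_eq_zero.1 h.symm)
        have hA := hkey c
        have hB := hkey (-c)
        rw [hf1, hf2, e1, e2, sub_zero, sub_zero, hσ2] at hA hB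
        simp only [and_self, z1, z2, and_false, if_false, neg_eq_iff_eq_neg,
          neg_inj, neg_neg] at hA hB
        linarith [hA, hB]
      · intro c hc htor
        have hcc : -c = c := neg_eq_of_add_eq_zero_left htor
        have z1 : ¬(0:H) = c := fun h => hc h.symm
        have hA := hkey c
        rw [hf1, hf2, e1, e2, sub_zero, sub_zero, hσ2] at hA
        simp only [and_self, z1, and_false, if_false, neg_eq_iff_eq_neg] at hA
        rw [hcc] at hA
        exact ⟨(if σ x1 = c then (1:ℤ) else 0), by linarith [hA]⟩
    · constructor
      · intro c hc
        have z1 : ¬(0:H) = c := fun h => hc h.symm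
        have z2 : ¬(0:H) = -c := fun h => hc (neg_eq_zero.1 h.symm)
        have hA := hkey c
        have hB := hkey (-c)
        rw [hf1, hf2, e1, e2, sub_self, sub_self, hσ2] at hA hB
        simp only [and_self, z1, z2, and_false, if_false, neg_eq_iff_eq_neg,
          neg_inj, neg_neg] at hA hB
        linarith [hA, hB]
      · intro c hc htor
        have hcc : -c = c := neg_eq_of_add_eq_zero_left htor
        have z1 : ¬(0:H) = c := fun h => hc h.symm
        have hA := hkey c
        rw [hf1, hf2, e1, e2, sub_self, sub_self, hσ2] at hA
        simp only [and_self, z1, and_false, if_false, neg_eq_iff_eq_neg] at hA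
        rw [hcc] at hA
        exact ⟨-(if σ x1 = c then (1:ℤ) else 0), by linarith [hA]⟩
  · -- I₂ move
    have hzero : ∀ c : H, cntQ σ r' S c - cntQ σ r S c = 0 := by
      intro c
      have hcases : (r x1 = 0 ∧ r x2 = σ x2) ∨ (r x1 = σ x1 ∧ r x2 = 0) := by
        rcases hv x1 h1 with h | h
        · left; refine ⟨h, ?_⟩
          rcases hv x2 h2 with h' | h'
          · exact absurd (h.trans h'.symm) hvne
          · exact h'
        · right; refine ⟨h, ?_⟩
          rcases hv x2 h2 with h' | h'
          · exact h'
          · exact absurd (h.trans (h'.trans hσ.symm).symm) hvne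
      have hA := hkey c
      rcases hcases with ⟨e1, e2⟩ | ⟨e1, e2⟩
      · rw [hf1, hf2, e1, e2, sub_zero, sub_self, ← hσ] at hA
        rw [hA]; ring
      · rw [hf1, hf2, e1, e2, sub_zero, sub_self, ← hσ] at hA
        rw [hA]; ring
    constructor
    · intro c _
      linarith [hzero c, hzero (-c)]
    · intro c _ _
      rw [hzero c]
      exact dvd_zero 2

lemma bridge (σ r0 r1 : α → H) (S V : Finset α)
    (hV : V = S.filter (fun x => ¬ r0 x = r1 x))
    (h0 : ∀ x ∈ S, r0 x = 0 ∨ r0 x = σ x)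
    (h1 : ∀ x ∈ S, r1 x = 0 ∨ r1 x = σ x) :
    (∀ x ∈ V, σ x ≠ 0 ∧ r1 x = σ x - r0 x ∧ (r0 x = 0 ∨ r0 x = σ x)) ∧
    (∀ c : H, c ≠ 0 → cntQ σ r1 S c - cntQ σ r0 S c =
      ((V.filter fun z => σ z = c ∧ r0 z = 0).card : ℤ) -
      ((V.filter fun z => σ z = c ∧ ¬ r0 z = 0).card : ℤ)) ∧
    (∀ c : H, (V.filter fun z => σ z = c).card =
      (V.filter fun z => σ z = c ∧ r0 z = 0).card +
      (V.filter fun z => σ z = c ∧ ¬ r0 z = 0).card) := by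
  have hsub : V ⊆ S := by rw [hV]; exact Finset.filter_subset _ _
  have hmem : ∀ x ∈ V, x ∈ S ∧ ¬ r0 x = r1 x := by
    intro x hx; rw [hV] at hx; exact Finset.mem_filter.1 hx
  have hfacts : ∀ x ∈ V, σ x ≠ 0 ∧ r1 x = σ x - r0 x ∧ (r0 x = 0 ∨ r0 x = σ x) := by
    intro x hx
    obtain ⟨hxS, hne⟩ := hmem x hx
    rcases h0 x hxS with e0 | e0 <;> rcases h1 x hxS with e1 | e1
    · exact absurd (e0.trans e1.symm) hne
    · refine ⟨?_, by rw [e0, e1, sub_zero], Or.inl e0⟩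
      intro h; exact hne (by rw [e0, e1, h])
    · refine ⟨?_, by rw [e0, e1, sub_self], Or.inr e0⟩
      intro h; exact hne (by rw [e0, e1, h])
    · exact absurd (e0.trans e1.symm) hne
  refine ⟨hfacts, ?_, ?_⟩
  · intro c hc
    unfold cntQ
    rw [← Finset.sum_sub_distrib]
    rw [show (∑ x ∈ S, ((if σ x = c ∧ r1 x = c then (1:ℤ) else 0) -
        (if σ x = c ∧ r0 x = c then (1:ℤ) else 0))) =
        ∑ x ∈ V, ((if σ x = c ∧ r1 x = c then (1:ℤ) else 0) -
        (if σ x = c ∧ r0 x = c then (1:ℤ) else 0)) from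
      (Finset.sum_subset hsub (by
        intro z hz hz'
        have : r0 z = r1 z := by
          by_contra hcon
          exact hz' (by rw [hV]; exact Finset.mem_filter.2 ⟨hz, hcon⟩)
        rw [this, sub_self])).symm]
    rw [show (∑ x ∈ V, ((if σ x = c ∧ r1 x = c then (1:ℤ) else 0) -
        (if σ x = c ∧ r0 x = c then (1:ℤ) else 0))) =
        ∑ x ∈ V, ((if σ x = c ∧ r0 x = 0 then (1:ℤ) else 0) -
        (if σ x = c ∧ ¬ r0 x = 0 then (1:ℤ) else 0)) from
      Finset.sum_congr rfl (by
        intro x hx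
        obtain ⟨hσ0, hr1, hr0v⟩ := hfacts x hx
        rcases hr0v with e | e
        · rw [e] at hr1; rw [sub_zero] at hr1
          rw [e, hr1]
          have hz : ¬(0:H) = c := fun h => hc h.symm
          simp only [and_self, hz, and_false, if_false, not_true, eq_self_iff_true,
            and_true, not_false_iff, sub_zero]
        · have hne0 : ¬ r0 x = 0 := by rw [e]; exact hσ0
          rw [e] at hr1; rw [sub_self] at hr1
          rw [e, hr1]
          have hz : ¬(0:H) = c := fun h => hc h.symm
          simp only [and_self, hz, and_false, if_false, hσ0, not_false_iff, and_true,
            zero_sub, sub_zero])]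
    rw [Finset.sum_sub_distrib]
    rw [Finset.sum_boole, Finset.sum_boole]
  · intro c
    rw [show (V.filter fun z => σ z = c ∧ r0 z = 0) =
        (V.filter fun z => σ z = c).filter (fun z => r0 z = 0) from by
      rw [Finset.filter_filter],
      show (V.filter fun z => σ z = c ∧ ¬ r0 z = 0) =
        (V.filter fun z => σ z = c).filter (fun z => ¬ r0 z = 0) from by
      rw [Finset.filter_filter]]
    exact (Finset.card_filter_add_card_filter_not _).symm

lemma card_filter_erase (V : Finset α) (x : α) (hx : x ∈ V) (p : α → Prop)
    [DecidablePred p] :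
    ((V.filter p).card : ℤ) = (((V.erase x).filter p).card : ℤ) + ind (p x) := by
  unfold ind
  by_cases hp : p x
  · rw [if_pos hp, Finset.filter_erase,
      Finset.card_erase_of_mem (Finset.mem_filter.2 ⟨hx, hp⟩)]
    have : 0 < (V.filter p).card := Finset.card_pos.2 ⟨x, Finset.mem_filter.2 ⟨hx, hp⟩⟩
    push_cast [Nat.cast_sub (by omega : 1 ≤ (V.filter p).card)]
    ring
  · rw [if_neg hp, Finset.filter_erase,
      Finset.erase_eq_of_notMem (fun h => hp (Finset.mem_filter.1 h).2), add_zero]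

lemma wt_ok (σ r0 : α → H) (x y : α) (hx0 : σ x ≠ 0) (hy0 : σ y ≠ 0)
    (hvx : r0 x = 0 ∨ r0 x = σ x) (hvy : r0 y = 0 ∨ r0 y = σ y)
    (hc : Compat σ r0 x y) (c : H) (hcne : c ≠ 0) :
    (ind (σ x = c ∧ r0 x = 0) + ind (σ y = c ∧ r0 y = 0))
    - (ind (σ x = c ∧ ¬ r0 x = 0) + ind (σ y = c ∧ ¬ r0 y = 0))
    = (ind (σ x = -c ∧ r0 x = 0) + ind (σ y = -c ∧ r0 y = 0))
    - (ind (σ x = -c ∧ ¬ r0 x = 0) + ind (σ y = -c ∧ ¬ r0 y = 0)) := by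
  unfold ind
  rcases hc with ⟨hσ, hr⟩ | ⟨hσ, hr⟩
  · have hσ2 : σ y = -σ x := eq_neg_of_add_eq_zero_right hσ
    rcases hvx with ex | ex
    · have ey : r0 y = 0 := by
        have : r0 y = -r0 x := eq_neg_of_add_eq_zero_right hr
        rw [this, ex, neg_zero]
      simp only [ex, ey, not_true, and_true, and_false, if_false, hσ2,
        neg_eq_iff_eq_neg, neg_inj, neg_neg, eq_self_iff_true]
      ring
    · have ey : r0 y = σ y := by
        have : r0 y = -r0 x := eq_neg_of_add_eq_zero_right hr
        rw [this, ex, hσ2]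
      have hnx : ¬ r0 x = 0 := by rw [ex]; exact hx0
      have hny : ¬ r0 y = 0 := by rw [ey]; exact hy0
      simp only [hnx, hny, and_false, if_false, not_false_iff, and_true, hσ2,
        neg_eq_iff_eq_neg, neg_inj, neg_neg]
      ring
  · rcases hvx with ex | ex
    · have ey : r0 y = σ y := by
        rcases hvy with h | h
        · exact absurd (ex.trans h.symm) hr
        · exact h
      have hny : ¬ r0 y = 0 := by rw [ey, ← hσ]; exact hx0
      simp only [ex, hny, not_true, and_true, and_false, if_false, not_false_iff,
        eq_self_iff_true, hσ]
      ring
    · have hnx : ¬ r0 x = 0 := by rw [ex]; exact hx0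
      have ey : r0 y = 0 := by
        rcases hvy with h | h
        · exact h
        · exact absurd (ex.trans (h.trans hσ.symm).symm) hr
      simp only [ey, hnx, not_true, and_true, and_false, if_false, not_false_iff,
        eq_self_iff_true, hσ]
      ring

lemma matching (σ r0 : α → H) :
    ∀ (N : ℕ) (V : Finset α), V.card ≤ N →
    (∀ x ∈ V, σ x ≠ 0) →
    (∀ x ∈ V, r0 x = 0 ∨ r0 x = σ x) →
    (∀ c : H, c ≠ 0 →
      ((V.filter fun z => σ z = c ∧ r0 z = 0).card : ℤ) -
        ((V.filter fun z => σ z = c ∧ ¬ r0 z = 0).card : ℤ) =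
      ((V.filter fun z => σ z = -c ∧ r0 z = 0).card : ℤ) -
        ((V.filter fun z => σ z = -c ∧ ¬ r0 z = 0).card : ℤ)) →
    (∀ c : H, c ≠ 0 → c + c = 0 → 2 ∣ (V.filter fun z => σ z = c).card) →
    ∃ P : List (α × α),
      (∀ p ∈ P, p.1 ∈ V ∧ p.2 ∈ V ∧ p.1 ≠ p.2 ∧ Compat σ r0 p.1 p.2) ∧
      P.Pairwise (fun p q => p.1 ≠ q.1 ∧ p.1 ≠ q.2 ∧ p.2 ≠ q.1 ∧ p.2 ≠ q.2) ∧
      (∀ x ∈ V, ∃ p ∈ P, x = p.1 ∨ x = p.2) := by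
  intro N
  induction N with
  | zero =>
    intro V hcard _ _ _ _
    have : V = ∅ := Finset.card_eq_zero.1 (Nat.le_zero.1 hcard)
    subst this
    exact ⟨[], by simp, by simp, by simp⟩
  | succ N ih =>
    intro V hcard hv0 hv hbal hpar
    rcases Finset.eq_empty_or_nonempty V with rfl | ⟨x, hx⟩
    · exact ⟨[], by simp, by simp, by simp⟩
    have hσx := hv0 x hx
    have hfind : ∃ y ∈ V, y ≠ x ∧ Compat σ r0 x y := by
      by_cases htor : σ x + σ x = 0
      · have hxf : x ∈ V.filter (fun z => σ z = σ x) :=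
          Finset.mem_filter.2 ⟨hx, rfl⟩
        have h2 : 2 ∣ (V.filter fun z => σ z = σ x).card := hpar (σ x) hσx htor
        have h1' : 1 < (V.filter fun z => σ z = σ x).card := by
          have : 0 < (V.filter fun z => σ z = σ x).card := Finset.card_pos.2 ⟨x, hxf⟩
          omega
        obtain ⟨y, hymem, hyx⟩ := Finset.exists_mem_ne h1' x
        obtain ⟨hyV, hyσ⟩ := Finset.mem_filter.1 hymem
        refine ⟨y, hyV, hyx, ?_⟩
        by_cases hre : r0 x = r0 y
        · left
          refine ⟨by rw [hyσ]; exact htor, ?_⟩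
          rcases hv x hx with e | e
          · rw [← hre, e, add_zero]
          · rw [← hre, e]; exact htor
        · right; exact ⟨hyσ.symm, hre⟩
      · have hnc : ¬ σ x = -σ x := fun h => htor (add_eq_zero_iff_eq_neg.2 h)
        rcases hv x hx with ex | ex
        · by_cases hA : (V.filter fun z => σ z = -σ x ∧ r0 z = 0).Nonempty
          · obtain ⟨y, hy⟩ := hA
            have hy' := Finset.mem_filter.1 hy
            have hyV := hy'.1
            have hyσ := hy'.2.1
            have hyr := hy'.2.2
            refine ⟨y, hyV, fun h => hnc (by rw [h] at hyσ; exact hyσ), Or.inl ⟨?_, ?_⟩⟩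
            · rw [hyσ]; abel
            · rw [ex, hyr, add_zero]
          · by_cases hB : (V.filter fun z => σ z = σ x ∧ ¬ r0 z = 0).Nonempty
            · obtain ⟨y, hy⟩ := hB
              have hy' := Finset.mem_filter.1 hy
              have hyV := hy'.1
              have hyσ := hy'.2.1
              have hyr := hy'.2.2
              refine ⟨y, hyV, fun h => hyr (by rw [h, ex]), Or.inr ⟨hyσ.symm, ?_⟩⟩
              rw [ex]; exact fun h => hyr h.symm
            · exfalso
              have c1 : (V.filter fun z => σ z = -σ x ∧ r0 z = 0).card = 0 := by
                rw [Finset.card_eq_zero]; exact Finset.not_nonempty_iff_eq_empty.1 hA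
              have c2 : (V.filter fun z => σ z = σ x ∧ ¬ r0 z = 0).card = 0 := by
                rw [Finset.card_eq_zero]; exact Finset.not_nonempty_iff_eq_empty.1 hB
              have hpos : 0 < (V.filter fun z => σ z = σ x ∧ r0 z = 0).card :=
                Finset.card_pos.2 ⟨x, Finset.mem_filter.2 ⟨hx, rfl, ex⟩⟩
              have hb := hbal (σ x) hσx
              rw [c1, c2] at hb
              omega
        · have hnx : ¬ r0 x = 0 := by rw [ex]; exact hσx
          by_cases hA : (V.filter fun z => σ z = -σ x ∧ ¬ r0 z = 0).Nonempty
          · obtain ⟨y, hy⟩ := hA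
            have hy' := Finset.mem_filter.1 hy
            have hyV := hy'.1
            have hyσ := hy'.2.1
            have hyr := hy'.2.2
            have hyval : r0 y = σ y := by
              rcases hv y hyV with h | h
              · exact absurd h hyr
              · exact h
            refine ⟨y, hyV, fun h => hnc (by rw [h] at hyσ; exact hyσ), Or.inl ⟨?_, ?_⟩⟩
            · rw [hyσ]; abel
            · rw [ex, hyval, hyσ]; abel
          · by_cases hB : (V.filter fun z => σ z = σ x ∧ r0 z = 0).Nonempty
            · obtain ⟨y, hy⟩ := hB
              have hy' := Finset.mem_filter.1 hy
              have hyV := hy'.1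
              have hyσ := hy'.2.1
              have hyr := hy'.2.2
              refine ⟨y, hyV, fun h => hnx (by rw [h] at hyr; exact hyr),
                Or.inr ⟨hyσ.symm, by rw [hyr]; exact hnx⟩⟩
            · exfalso
              have c1 : (V.filter fun z => σ z = -σ x ∧ ¬ r0 z = 0).card = 0 := by
                rw [Finset.card_eq_zero]; exact Finset.not_nonempty_iff_eq_empty.1 hA
              have c2 : (V.filter fun z => σ z = σ x ∧ r0 z = 0).card = 0 := by
                rw [Finset.card_eq_zero]; exact Finset.not_nonempty_iff_eq_empty.1 hB
              have hpos : 0 < (V.filter fun z => σ z = σ x ∧ ¬ r0 z = 0).card :=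
                Finset.card_pos.2 ⟨x, Finset.mem_filter.2 ⟨hx, rfl, hnx⟩⟩
              have hb := hbal (σ x) hσx
              rw [c1, c2] at hb
              omega
    obtain ⟨y, hyV, hyx, hcomp⟩ := hfind
    have hxy : x ≠ y := hyx.symm
    have hyV' : y ∈ V.erase x := Finset.mem_erase.2 ⟨hyx, hyV⟩
    have hsub' : ((V.erase x).erase y) ⊆ V :=
      fun z hz => Finset.mem_of_mem_erase (Finset.mem_of_mem_erase hz)
    have hxnot : x ∉ (V.erase x).erase y :=
      fun h => (Finset.mem_erase.1 (Finset.mem_of_mem_erase h)).1 rfl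
    have hynot : y ∉ (V.erase x).erase y := fun h => (Finset.mem_erase.1 h).1 rfl
    have hcard' : ((V.erase x).erase y).card ≤ N := by
      have e1 : (V.erase x).card = V.card - 1 := Finset.card_erase_of_mem hx
      have e2 : ((V.erase x).erase y).card = (V.erase x).card - 1 :=
        Finset.card_erase_of_mem hyV'
      have : 0 < V.card := Finset.card_pos.2 ⟨x, hx⟩
      omega
    have hcer : ∀ (p : α → Prop) [DecidablePred p], ((V.filter p).card : ℤ) =
        (((V.erase x).erase y).filter p).card + (ind (p x) + ind (p y)) := by
      intro p _
      rw [card_filter_erase V x hx p, card_filter_erase (V.erase x) y hyV' p]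
      ring
    have hv0' : ∀ z ∈ (V.erase x).erase y, σ z ≠ 0 := fun z hz => hv0 z (hsub' hz)
    have hv' : ∀ z ∈ (V.erase x).erase y, r0 z = 0 ∨ r0 z = σ z :=
      fun z hz => hv z (hsub' hz)
    have hbal' : ∀ c : H, c ≠ 0 →
        ((((V.erase x).erase y).filter fun z => σ z = c ∧ r0 z = 0).card : ℤ) -
          ((((V.erase x).erase y).filter fun z => σ z = c ∧ ¬ r0 z = 0).card : ℤ) =
        ((((V.erase x).erase y).filter fun z => σ z = -c ∧ r0 z = 0).card : ℤ) -
          ((((V.erase x).erase y).filter fun z => σ z = -c ∧ ¬ r0 z = 0).card : ℤ) := by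
      intro c hc
      have hb := hbal c hc
      have hw := wt_ok σ r0 x y hσx (hv0 y hyV) (hv x hx) (hv y hyV) hcomp c hc
      have e1 : ((V.filter fun z => σ z = c ∧ r0 z = 0).card : ℤ) =
          ((((V.erase x).erase y).filter fun z => σ z = c ∧ r0 z = 0).card : ℤ) +
          (ind (σ x = c ∧ r0 x = 0) + ind (σ y = c ∧ r0 y = 0)) := hcer _
      have e2 : ((V.filter fun z => σ z = c ∧ ¬ r0 z = 0).card : ℤ) =
          ((((V.erase x).erase y).filter fun z => σ z = c ∧ ¬ r0 z = 0).card : ℤ) +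
          (ind (σ x = c ∧ ¬ r0 x = 0) + ind (σ y = c ∧ ¬ r0 y = 0)) := hcer _
      have e3 : ((V.filter fun z => σ z = -c ∧ r0 z = 0).card : ℤ) =
          ((((V.erase x).erase y).filter fun z => σ z = -c ∧ r0 z = 0).card : ℤ) +
          (ind (σ x = -c ∧ r0 x = 0) + ind (σ y = -c ∧ r0 y = 0)) := hcer _
      have e4 : ((V.filter fun z => σ z = -c ∧ ¬ r0 z = 0).card : ℤ) =
          ((((V.erase x).erase y).filter fun z => σ z = -c ∧ ¬ r0 z = 0).card : ℤ) +
          (ind (σ x = -c ∧ ¬ r0 x = 0) + ind (σ y = -c ∧ ¬ r0 y = 0)) := hcer _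
      linarith [hb, hw, e1, e2, e3, e4]
    have hpar' : ∀ c : H, c ≠ 0 → c + c = 0 →
        2 ∣ (((V.erase x).erase y).filter fun z => σ z = c).card := by
      intro c hc htc
      have hp := hpar c hc htc
      have e : ((V.filter fun z => σ z = c).card : ℤ) =
          (((V.erase x).erase y).filter fun z => σ z = c).card +
          (ind (σ x = c) + ind (σ y = c)) := hcer _
      have hcc : -c = c := neg_eq_of_add_eq_zero_left htc
      have hσ2 : σ y = -σ x ∨ σ y = σ x := by
        rcases hcomp with ⟨h, _⟩ | ⟨h, _⟩
        · exact Or.inl (eq_neg_of_add_eq_zero_right h)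
        · exact Or.inr h.symm
      have hiff : (σ x = c) ↔ (σ y = c) := by
        rcases hσ2 with h | h
        · rw [h]
          constructor
          · intro h'; rw [h', hcc]
          · intro h'
            have := neg_eq_iff_eq_neg.1 h'
            rw [hcc] at this; exact this
        · rw [h]
      have hind : ind (σ x = c) = ind (σ y = c) := by
        unfold ind; rw [if_congr hiff rfl rfl]
      rw [hind] at e
      have hk : ind (σ y = c) = 0 ∨ ind (σ y = c) = 1 := by
        unfold ind; by_cases h : σ y = c <;> simp [h]
      omega
    obtain ⟨P, hP1, hP2, hP3⟩ := ih ((V.erase x).erase y) hcard' hv0' hv' hbal' hpar'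
    refine ⟨(x, y) :: P, ?_, ?_, ?_⟩
    · intro p hp
      rcases List.mem_cons.1 hp with h | h
      · subst h; exact ⟨hx, hyV, hxy, hcomp⟩
      · obtain ⟨h1, h2, h3, h4⟩ := hP1 p h
        exact ⟨hsub' h1, hsub' h2, h3, h4⟩
    · refine List.pairwise_cons.2 ⟨?_, hP2⟩
      intro p hp
      obtain ⟨h1, h2, _, _⟩ := hP1 p hp
      exact ⟨(Finset.ne_of_mem_erase (Finset.mem_of_mem_erase h1)).symm,
        (Finset.ne_of_mem_erase (Finset.mem_of_mem_erase h2)).symm,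
        (Finset.ne_of_mem_erase h1).symm,
        (Finset.ne_of_mem_erase h2).symm⟩
    · intro z hz
      by_cases hzx : z = x
      · exact ⟨(x, y), List.mem_cons_self, Or.inl hzx⟩
      · by_cases hzy : z = y
        · exact ⟨(x, y), List.mem_cons_self, Or.inr hzy⟩
        · have hzV' : z ∈ (V.erase x).erase y :=
            Finset.mem_erase.2 ⟨hzy, Finset.mem_erase.2 ⟨hzx, hz⟩⟩
          obtain ⟨p, hp, h⟩ := hP3 z hzV'
          exact ⟨p, List.mem_cons_of_mem _ hp, h⟩


/-! ### part 3: WBM constructors and row invariance -/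

lemma valid_g_ne_s {T : WovenBasedMatrix α H n} {m : MoveDatum α n}
    (h : m.valid T) (k : Fin n) : m.g ≠ T.s k := by
  intro he
  by_cases hk : k = m.j
  · exact h.2.1 (by rw [he, hk])
  · have h1 : m.g ∈ T.G m.j := h.1
    have h2 : m.g ∈ T.G k := by rw [he]; exact T.s_mem k
    exact (Finset.disjoint_left.1 (T.disjointG k m.j hk) h2) h1

lemma memG_carrier {T : WovenBasedMatrix α H n} {k : Fin n} {a : α}
    (h : a ∈ T.G k) : a ∈ T.carrier :=
  Finset.mem_union_left _ (Finset.mem_biUnion.2 ⟨k, Finset.mem_univ _, h⟩)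

lemma memI_carrier {T : WovenBasedMatrix α H n} {a : α}
    (h : a ∈ T.I) : a ∈ T.carrier := Finset.mem_union_right _ h

lemma applyMoves_srow {T : WovenBasedMatrix α H n}
    (L : List (MoveDatum α n)) (hval : ∀ m ∈ L, m.valid T) (b : α → α → H)
    (k : Fin n) (a : α) :
    applyMoves T.s L b (T.s k) a = b (T.s k) a := by
  apply applyMoves_untouched
  intro m hm
  have hv := hval m hm
  constructor
  · rintro ⟨h1, _⟩; exact valid_g_ne_s hv k h1.symm
  · rintro ⟨h1, h2⟩
    have hsk : T.s k ∈ T.I := by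
      rcases h2 with h2 | h2 <;> rw [h2]
      · exact hv.2.2.1
      · exact hv.2.2.2.1
    exact (Finset.disjoint_left.1 (T.disjointI k) (T.s_mem k)) hsk

lemma rowInv (T1 : WovenBasedMatrix α H n) (g : α) (jg : Fin n)
    (hg : g ∈ T1.G jg) (σ : α → H) :
    ∀ (L : List (MoveDatum α n)) (b : α → α → H),
    (∀ m ∈ L, m.valid T1) → movesApplicable T1.s L b →
    (∀ x ∈ T1.I, b g x = 0 ∨ b g x = σ x) →
    (∀ x ∈ T1.I, b (T1.s jg) x = σ x) →
    (∀ x ∈ T1.I, applyMoves T1.s L b g x = 0 ∨ applyMoves T1.s L b g x = σ x) ∧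
    (∀ c : H, c ≠ 0 → cntQ σ (fun x => applyMoves T1.s L b g x) T1.I c -
        cntQ σ (fun x => applyMoves T1.s L b g x) T1.I (-c) =
      cntQ σ (fun x => b g x) T1.I c - cntQ σ (fun x => b g x) T1.I (-c)) ∧
    (∀ c : H, c ≠ 0 → c + c = 0 →
      (2:ℤ) ∣ (cntQ σ (fun x => applyMoves T1.s L b g x) T1.I c -
        cntQ σ (fun x => b g x) T1.I c)) := by
  intro L
  induction L with
  | nil =>
    intro b _ _ hbval _
    refine ⟨hbval, fun c _ => rfl, fun c _ _ => ⟨0, ?_⟩⟩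
    show cntQ σ (fun x => b g x) T1.I c - cntQ σ (fun x => b g x) T1.I c = 2 * 0
    ring
  | cons m L ih =>
    intro b hval happ hbval hbs
    simp only [applyMoves]
    have hvm := hval m (List.mem_cons_self)
    have hx1 : m.x1 ∈ T1.I := hvm.2.2.1
    have hx2 : m.x2 ∈ T1.I := hvm.2.2.2.1
    have hxne : m.x1 ≠ m.x2 := hvm.2.2.2.2
    have hgI : ∀ x ∈ T1.I, x ≠ m.g := by
      intro x hx he
      exact (Finset.disjoint_left.1 (T1.disjointI m.j) hvm.1) (he ▸ hx)
    have hsrow2 : ∀ x ∈ T1.I, IMap b (T1.s m.j) m.g m.x1 m.x2 (T1.s jg) x = b (T1.s jg) x := by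
      intro x hx
      unfold IMap
      rw [if_neg, if_neg]
      · rintro ⟨h1, _⟩; exact hgI x hx h1
      · rintro ⟨h1, _⟩; exact valid_g_ne_s hvm jg h1.symm
    by_cases hmg : m.g = g
    · have hjm : m.j = jg := by
        by_contra hne
        exact (Finset.disjoint_left.1 (T1.disjointG m.j jg hne) (hmg ▸ hvm.1)) hg
      have hrow : ∀ x ∈ T1.I, IMap b (T1.s m.j) m.g m.x1 m.x2 g x =
          if x = m.x1 ∨ x = m.x2 then σ x - b g x else b g x := by
        intro x hx
        unfold IMap
        by_cases hc : x = m.x1 ∨ x = m.x2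
        · rw [if_pos ⟨hmg.symm, hc⟩, if_pos hc, hjm, hbs x hx]
        · rw [if_neg (fun hcc => hc hcc.2), if_neg, if_neg hc]
          rintro ⟨h1, _⟩; exact hgI x hx h1
      have happ' : (b g m.x1 + b g m.x2 = 0 ∧ σ m.x1 + σ m.x2 = 0) ∨
          (b g m.x1 ≠ b g m.x2 ∧ σ m.x1 = σ m.x2) := by
        have h := happ.1
        unfold MoveApplicable IsGAnn IsGUnequal at h
        rw [hmg, hjm] at h
        rw [hbs m.x1 hx1, hbs m.x2 hx2] at h
        split_ifs at h
        · exact Or.inl ⟨h.1, h.2⟩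
        · exact Or.inr ⟨h.1, h.2⟩
      obtain ⟨hval2, hinv2, hpar2⟩ := Qstep σ (fun x => b g x)
        (fun x => IMap b (T1.s m.j) m.g m.x1 m.x2 g x) T1.I m.x1 m.x2 hx1 hx2 hxne
        hbval happ' hrow
      obtain ⟨A, B, C⟩ := ih (IMap b (T1.s m.j) m.g m.x1 m.x2)
        (fun m' hm' => hval m' (List.mem_cons_of_mem _ hm')) happ.2 hval2
        (fun x hx => by rw [hsrow2 x hx]; exact hbs x hx)
      refine ⟨A, ?_, ?_⟩
      · intro c hc
        rw [B c hc, hinv2 c hc]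
      · intro c hc htc
        have d1 := C c hc htc
        have d2 := hpar2 c hc htc
        have : cntQ σ (fun x => applyMoves T1.s L (IMap b (T1.s m.j) m.g m.x1 m.x2) g x) T1.I c -
            cntQ σ (fun x => b g x) T1.I c =
          (cntQ σ (fun x => applyMoves T1.s L (IMap b (T1.s m.j) m.g m.x1 m.x2) g x) T1.I c -
            cntQ σ (fun x => IMap b (T1.s m.j) m.g m.x1 m.x2 g x) T1.I c) +
          (cntQ σ (fun x => IMap b (T1.s m.j) m.g m.x1 m.x2 g x) T1.I c -
            cntQ σ (fun x => b g x) T1.I c) := by ring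
        rw [this]
        exact dvd_add d1 d2
    · have hpres : ∀ x ∈ T1.I, IMap b (T1.s m.j) m.g m.x1 m.x2 g x = b g x := by
        intro x hx
        unfold IMap
        rw [if_neg, if_neg]
        · rintro ⟨h1, _⟩; exact hgI x hx h1
        · rintro ⟨h1, _⟩; exact hmg h1.symm
      obtain ⟨A, B, C⟩ := ih (IMap b (T1.s m.j) m.g m.x1 m.x2)
        (fun m' hm' => hval m' (List.mem_cons_of_mem _ hm')) happ.2
        (fun x hx => by rw [hpres x hx]; exact hbval x hx)
        (fun x hx => by rw [hsrow2 x hx]; exact hbs x hx)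
      refine ⟨A, ?_, ?_⟩
      · intro c hc
        rw [B c hc, cntQ_congr hpres, cntQ_congr hpres]
      · intro c hc htc
        have := C c hc htc
        rwa [cntQ_congr hpres] at this

lemma WBM_mk (X : WovenBasedMatrix α H n) (sOf : α → α) (D : α → Finset α)
    (hD : ∀ g x, x ∈ D g → (∃ k, g ∈ X.G k ∧ g ≠ X.s k ∧ sOf g = X.s k) ∧ x ∈ X.I)
    (b' : α → α → H)
    (hb' : ∀ a ∈ X.carrier, ∀ a' ∈ X.carrier, b' a a' = flips sOf D X.b a a') :
    ∃ Y : WovenBasedMatrix α H n, Y.G = X.G ∧ Y.I = X.I ∧ Y.s = X.s ∧ Y.b = b' := by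
  have hDnotI : ∀ x, x ∈ X.I → ∀ y, y ∉ D x := by
    intro x hx y hmem
    obtain ⟨⟨k, hk, _⟩, _⟩ := hD x y hmem
    exact (Finset.disjoint_left.1 (X.disjointI k) hk) hx
  have hDs : ∀ (k : Fin n) (y : α), y ∉ D (X.s k) := by
    intro k y hmem
    obtain ⟨⟨k', hk', hne, _⟩, _⟩ := hD _ y hmem
    by_cases he : k' = k
    · exact hne (by rw [he])
    · exact (Finset.disjoint_left.1 (X.disjointG k' k he) hk') (X.s_mem k)
  have hDG : ∀ g x, x ∈ D g → g ∈ X.carrier ∧ x ∈ X.carrier ∧ sOf g ∈ X.carrier := by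
    intro g x hmem
    obtain ⟨⟨k, hk, _, hsk⟩, hxI⟩ := hD g x hmem
    exact ⟨memG_carrier hk, memI_carrier hxI, by rw [hsk]; exact memG_carrier (X.s_mem k)⟩
  have hsval : ∀ (k : Fin n) (x : α), x ∈ X.I →
      b' (X.s k) x = X.b (X.s k) x := by
    intro k x hx
    rw [hb' _ (memG_carrier (X.s_mem k)) x (memI_carrier hx),
      flips_of_not (hDs k x) (hDnotI x hx _)]
  refine ⟨⟨X.G, X.I, X.s, b', X.s_mem, X.disjointG, X.disjointI, ?_, ?_, ?_, ?_, ?_⟩,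
    rfl, rfl, rfl, rfl⟩
  · -- skew
    intro a ha a' ha'
    rw [hb' a ha a' ha', hb' a' ha' a ha]
    by_cases h1 : a' ∈ D a
    · have h2 : a ∉ D a' := by
        intro h
        obtain ⟨⟨k, hk, _⟩, _⟩ := hD a' a h
        exact (Finset.disjoint_left.1 (X.disjointI k) hk) (hD a a' h1).2
      obtain ⟨_, _, hs⟩ := hDG a a' h1
      rw [flips_pos1 h1, flips_pos2 h2 h1, X.skew (sOf a) hs a' ha', X.skew a ha a' ha']
      abel
    · by_cases h2 : a ∈ D a'
      · obtain ⟨_, _, hs⟩ := hDG a' a h2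
        rw [flips_pos2 h1 h2, flips_pos1 h2, X.skew a ha (sOf a') hs, X.skew a ha a' ha']
        abel
      · rw [flips_of_not h1 h2, flips_of_not h2 h1]
        exact X.skew a ha a' ha'
  · -- diag
    intro a ha
    have hd : a ∉ D a := by
      intro h
      obtain ⟨⟨k, hk, _⟩, hI⟩ := hD a a h
      exact (Finset.disjoint_left.1 (X.disjointI k) hk) hI
    rw [hb' a ha a ha, flips_of_not hd hd]
    exact X.diag a ha
  · -- inter_zero
    intro x hx y hy
    rw [hb' x (memI_carrier hx) y (memI_carrier hy),
      flips_of_not (hDnotI x hx y) (hDnotI y hy x)]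
    exact X.inter_zero x hx y hy
  · -- weave_two
    intro x hx
    obtain ⟨i, j, hij, h1, h2, h3, h4⟩ := X.weave_two x hx
    exact ⟨i, j, hij, by rw [hsval i x hx]; exact h1, by rw [hsval j x hx]; exact h2,
      by rw [hsval i x hx, hsval j x hx]; exact h3,
      fun k hk => h4 k (by rw [← hsval k x hx]; exact hk)⟩
  · -- weave_val
    intro i g hgi x hx
    rw [hb' g (memG_carrier hgi) x (memI_carrier hx), hsval i x hx]
    by_cases hmem : x ∈ D g
    · obtain ⟨⟨k, hk1, hk2, hk3⟩, _⟩ := hD g x hmem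
      have hki : k = i := by
        by_contra hne
        exact (Finset.disjoint_left.1 (X.disjointG k i hne) hk1) hgi
      rw [flips_pos1 hmem, hk3, hki]
      rcases X.weave_val i g hgi x hx with h | h
      · right; rw [h, sub_zero]
      · left; rw [h, sub_self]
    · have hmem2 : g ∉ D x := hDnotI x hx g
      rw [flips_of_not hmem hmem2]
      exact X.weave_val i g hgi x hx

lemma WBM_sub (X : WovenBasedMatrix α H n) (G' : Fin n → Finset α) (I' : Finset α)
    (s' : Fin n → α) (hs : s' = X.s)
    (hG : ∀ k, G' k ⊆ X.G k) (hI : I' ⊆ X.I)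
    (hsm : ∀ k, s' k ∈ G' k) (hdG : ∀ i j, i ≠ j → Disjoint (G' i) (G' j))
    (hdI : ∀ i, Disjoint (G' i) I') :
    ∃ Y : WovenBasedMatrix α H n, Y.G = G' ∧ Y.I = I' ∧ Y.s = s' ∧ Y.b = X.b := by
  have hc : (Finset.univ.biUnion G' ∪ I') ⊆ X.carrier := by
    intro a ha
    rcases Finset.mem_union.1 ha with h | h
    · rcases Finset.mem_biUnion.1 h with ⟨k, _, hk⟩
      exact Finset.mem_union_left _
        (Finset.mem_biUnion.2 ⟨k, Finset.mem_univ _, hG k hk⟩)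
    · exact Finset.mem_union_right _ (hI h)
  refine ⟨⟨G', I', s', X.b, hsm, hdG, hdI, ?_, ?_, ?_, ?_, ?_⟩, rfl, rfl, rfl, rfl⟩
  · intro a ha a' ha'; exact X.skew a (hc ha) a' (hc ha')
  · intro a ha; exact X.diag a (hc ha)
  · intro x hx y hy; exact X.inter_zero x (hI hx) y (hI hy)
  · intro x hx
    obtain ⟨i, j, hij, h1, h2, h3, h4⟩ := X.weave_two x (hI hx)
    rw [hs]
    exact ⟨i, j, hij, h1, h2, h3, h4⟩
  · intro i g hgi x hx
    rw [hs]
    exact X.weave_val i g (hG i hgi) x (hI hx)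

lemma pairs_length_le (P : List (α × α)) (W : Finset α)
    (hpw : P.Pairwise (fun p q => p.1 ≠ q.1 ∧ p.1 ≠ q.2 ∧ p.2 ≠ q.1 ∧ p.2 ≠ q.2))
    (hW : ∀ p ∈ P, p.1 ∈ W ∨ p.2 ∈ W) : P.length ≤ W.card := by
  induction P generalizing W with
  | nil => simp
  | cons p P ih =>
    have hcover : ∃ w ∈ W, w = p.1 ∨ w = p.2 := by
      rcases hW p (List.mem_cons_self) with h | h
      · exact ⟨p.1, h, Or.inl rfl⟩
      · exact ⟨p.2, h, Or.inr rfl⟩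
    obtain ⟨w, hw, hwp⟩ := hcover
    have hstep : P.length ≤ (W.erase w).card := by
      apply ih (W.erase w) (List.Pairwise.of_cons hpw)
      intro q hq
      have hd := (List.pairwise_cons.1 hpw).1 q hq
      rcases hW q (List.mem_cons_of_mem _ hq) with h | h
      · left
        refine Finset.mem_erase.2 ⟨?_, h⟩
        rcases hwp with hwp | hwp <;> rw [hwp]
        · exact fun hc => hd.1 hc.symm
        · exact fun hc => hd.2.2.1 hc.symm
      · right
        refine Finset.mem_erase.2 ⟨?_, h⟩
        rcases hwp with hwp | hwp <;> rw [hwp]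
        · exact fun hc => hd.2.1 hc.symm
        · exact fun hc => hd.2.2.2 hc.symm
    have := Finset.card_erase_of_mem hw
    have hpos : 0 < W.card := Finset.card_pos.2 ⟨w, hw⟩
    simp only [List.length_cons]
    omega

lemma countP_pairs_le_one (B : List (MoveDatum α n)) (x : α)
    (hpw : B.Pairwise (fun m m' => m.x1 ≠ m'.x1 ∧ m.x1 ≠ m'.x2 ∧
      m.x2 ≠ m'.x1 ∧ m.x2 ≠ m'.x2)) :
    (B.countP fun m => decide (m.x1 = x ∨ m.x2 = x)) ≤ 1 := by
  induction B with
  | nil => simp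
  | cons m B ih =>
    rw [List.countP_cons]
    by_cases h : m.x1 = x ∨ m.x2 = x
    · have hz : (B.countP fun m => decide (m.x1 = x ∨ m.x2 = x)) = 0 := by
        rw [List.countP_eq_zero]
        intro m' hm'
        have hd := (List.pairwise_cons.1 hpw).1 m' hm'
        simp only [decide_eq_true_eq]
        rintro (h' | h') <;> rcases h with h | h
        · exact hd.1 (h.trans h'.symm)
        · exact hd.2.2.1 (h.trans h'.symm)
        · exact hd.2.1 (h.trans h'.symm)
        · exact hd.2.2.2 (h.trans h'.symm)
      rw [hz]
      simp [h]
    · rw [if_neg (by simpa using h), add_zero]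
      exact ih (List.Pairwise.of_cons hpw)

lemma countP_flatMap {β : Type*} (l : List β) (f : β → List (MoveDatum α n))
    (p : MoveDatum α n → Bool) :
    ((l.flatMap f).countP p) = (l.map fun b => (f b).countP p).sum := by
  induction l with
  | nil => simp
  | cons b l ih => simp [List.flatMap_cons, List.countP_append, ih]

lemma sum_le_single {β : Type*} (l : List β) (f : β → ℕ) (k : ℕ)
    (hk : ∀ b ∈ l, f b ≤ k)
    (h0 : l.Pairwise (fun b b' => f b = 0 ∨ f b' = 0)) : (l.map f).sum ≤ k := by
  induction l with
  | nil => simp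
  | cons b l ih =>
    simp only [List.map_cons, List.sum_cons]
    by_cases hb : f b = 0
    · rw [hb, zero_add]
      exact ih (fun b' hb' => hk b' (List.mem_cons_of_mem _ hb')) h0.of_cons
    · have : (l.map f).sum = 0 := by
        apply List.sum_eq_zero
        intro y hy
        rcases List.mem_map.1 hy with ⟨b', hb', rfl⟩
        rcases (List.pairwise_cons.1 h0).1 b' hb' with h | h
        · exact absurd h hb
        · exact h
      rw [this, add_zero]
      exact hk b (List.mem_cons_self)


lemma flips_eq_of_same (sOf : α → α) (D D' : α → Finset α) (b : α → α → H) (a a' : α)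
    (h1 : a' ∈ D a ↔ a' ∈ D' a) (h2 : a ∈ D a' ↔ a ∈ D' a') :
    flips sOf D b a a' = flips sOf D' b a a' := by
  unfold flips
  by_cases hc1 : a' ∈ D a
  · rw [if_pos hc1, if_pos (h1.1 hc1)]
  · rw [if_neg hc1, if_neg (fun h => hc1 (h1.2 h))]
    by_cases hc2 : a ∈ D a'
    · rw [if_pos hc2, if_pos (h2.1 hc2)]
    · rw [if_neg hc2, if_neg (fun h => hc2 (h2.2 h))]

lemma flips_congr (sOf : α → α) (D : α → Finset α) (b b' : α → α → H) (S : Finset α)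
    (hsOf : ∀ a a', a' ∈ D a → sOf a ∈ S)
    (h : ∀ a ∈ S, ∀ a' ∈ S, b a a' = b' a a') (a a' : α) (ha : a ∈ S) (ha' : a' ∈ S) :
    flips sOf D b a a' = flips sOf D b' a a' := by
  unfold flips
  by_cases hc1 : a' ∈ D a
  · rw [if_pos hc1, if_pos hc1, h _ (hsOf a a' hc1) a' ha', h a ha a' ha']
  · rw [if_neg hc1, if_neg hc1]
    by_cases hc2 : a ∈ D a'
    · rw [if_pos hc2, if_pos hc2, h a ha _ (hsOf a' a hc2), h a ha a' ha']
    · rw [if_neg hc2, if_neg hc2, h a ha a' ha']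

lemma pairwise_flatMap_of {β γ : Type*} (l : List β) (f : β → List γ) (R : γ → γ → Prop)
    (h1 : ∀ b ∈ l, (f b).Pairwise R)
    (h2 : l.Pairwise (fun b b' => ∀ x ∈ f b, ∀ y ∈ f b', R x y)) :
    (l.flatMap f).Pairwise R := by
  induction l with
  | nil => simp
  | cons b l ih =>
    rw [List.flatMap_cons, List.pairwise_append]
    refine ⟨h1 b (List.mem_cons_self), ih (fun b' hb' => h1 b' (List.mem_cons_of_mem _ hb'))
      h2.of_cons, ?_⟩
    intro x hx y hy
    rcases List.mem_flatMap.1 hy with ⟨b', hb', hy'⟩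
    exact (List.pairwise_cons.1 h2).1 b' hb' x hx y hy'

lemma pairwise_forall_of_symm {γ : Type*} {R : γ → γ → Prop} {l : List γ}
    (h : l.Pairwise R) (hsymm : ∀ x y, R x y → R y x) :
    ∀ x ∈ l, ∀ y ∈ l, x ≠ y → (R x y ∨ R y x) := by
  induction l with
  | nil => simp
  | cons a l ih =>
    intro x hx y hy hne
    rcases List.mem_cons.1 hx with h1 | h1 <;> rcases List.mem_cons.1 hy with h2 | h2
    · exact absurd (h1.trans h2.symm) hne
    · exact Or.inl (h1 ▸ (List.pairwise_cons.1 h).1 y h2)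
    · exact Or.inr (h2 ▸ (List.pairwise_cons.1 h).1 x h1)
    · exact ih h.of_cons x h1 y h2 hne

lemma movesApplicable_of_LOk {sfun : Fin n → α} {sOf : α → α} {GS IS : Finset α}
    (L : List (MoveDatum α n)) (hOk : LOk sfun sOf GS IS L) (b b₀ : α → α → H)
    (hpos : ∀ m ∈ L, b m.g m.x1 = b₀ m.g m.x1 ∧ b m.g m.x2 = b₀ m.g m.x2 ∧
      b (sfun m.j) m.x1 = b₀ (sfun m.j) m.x1 ∧ b (sfun m.j) m.x2 = b₀ (sfun m.j) m.x2)
    (happ : ∀ m ∈ L, MoveApplicable m.sq b₀ (sfun m.j) m.g m.x1 m.x2) :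
    movesApplicable sfun L b := by
  apply movesApplicable_of_base L b b₀ hpos happ hOk.pw
  intro m hm m' hm'
  obtain ⟨h1, h2, h3, _, _, h6, h7⟩ := hOk.types m hm
  obtain ⟨h1', h2', h3', _, _, h6', h7'⟩ := hOk.types m' hm'
  refine ⟨?_, ?_, ?_, ?_, ?_⟩
  · intro h; exact hOk.disj _ h1 (by rw [h]; exact h2')
  · intro h; exact hOk.disj _ h1 (by rw [h]; exact h3')
  · intro h; exact h6' (by rw [h]; exact h1)
  · intro h; exact h7' (by rw [h]; exact h2)
  · intro h; exact h7' (by rw [h]; exact h3)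

lemma flatMap_eq_flatten_map {β γ : Type*} (l : List β) (f : β → List γ) :
    l.flatMap f = (l.map f).flatten := by
  induction l with
  | nil => rfl
  | cons b l ih => simp [List.flatMap_cons, ih]

set_option maxHeartbeats 4000000 in
lemma core (T T1 Tm T2 : WovenBasedMatrix α H n)
    (N : List (MoveDatum α n))
    (hNval : ∀ m ∈ N, m.valid T1) (hNapp : movesApplicable T1.s N T1.b)
    (hTmG : Tm.G = T1.G) (hTmI : Tm.I = T1.I)
    (hTmb : ∀ a ∈ T1.carrier, ∀ a' ∈ T1.carrier, Tm.b a a' = applyMoves T1.s N T1.b a a')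
    (hs1 : T1.s = T.s)
    (hag1 : ∀ a ∈ T.carrier, ∀ a' ∈ T.carrier, T1.b a a' = T.b a a')
    (hGsub1 : ∀ k, T.G k ⊆ T1.G k) (hIsub1 : T.I ⊆ T1.I)
    (hs2 : T2.s = T.s)
    (hag2 : ∀ a ∈ T2.carrier, ∀ a' ∈ T2.carrier, Tm.b a a' = T2.b a a')
    (hGsub2 : ∀ k, T2.G k ⊆ T1.G k) (hIsub2 : T2.I ⊆ T1.I) :
    ∃ (N1 N2 N3 : List (MoveDatum α n)) (TA T1' TB TC : WovenBasedMatrix α H n),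
      (∀ m ∈ N1, m.valid T) ∧
      movesApplicable T.s N1 T.b ∧
      (TA.G = T.G ∧ TA.I = T.I ∧ TA.s = T.s) ∧
      (∀ a ∈ T.carrier, ∀ a' ∈ T.carrier, TA.b a a' = applyMoves T.s N1 T.b a a') ∧
      (T1'.G = T1.G ∧ T1'.I = T1.I ∧ T1'.s = T1.s) ∧
      (∀ m ∈ N2, m.valid T1') ∧
      movesApplicable T1'.s N2 T1'.b ∧
      (TB.G = T1.G ∧ TB.I = T1.I ∧ TB.s = T1.s) ∧
      (∀ a ∈ T1'.carrier, ∀ a' ∈ T1'.carrier,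
        TB.b a a' = applyMoves T1'.s N2 T1'.b a a') ∧
      (TC.G = T2.G ∧ TC.I = T2.I ∧ TC.s = T2.s ∧ TC.b = TB.b) ∧
      (∀ m ∈ N3, m.valid TC) ∧
      movesApplicable TC.s N3 TC.b ∧
      (∀ a ∈ T2.carrier, ∀ a' ∈ T2.carrier,
        applyMoves TC.s N3 TC.b a a' = T2.b a a') ∧
      ReducedMoves N2 ∧
      (∀ m ∈ N2,
        (m.g ∈ T1.carrier \ T.carrier ∨ m.x1 ∈ T1.carrier \ T.carrier ∨
          m.x2 ∈ T1.carrier \ T.carrier) ∧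
        (m.g ∈ T1.carrier \ T2.carrier ∨ m.x1 ∈ T1.carrier \ T2.carrier ∨
          m.x2 ∈ T1.carrier \ T2.carrier)) ∧
      (∀ m ∈ N2, m.g ∈ Finset.univ.biUnion T1.G ∧ m.x1 ∈ T1.I ∧ m.x2 ∈ T1.I) ∧
      (∀ (a : α) (W : Finset α), (∀ m ∈ N2, m.g = a → (m.x1 ∈ W ∨ m.x2 ∈ W)) →
        (N2.countP fun m => decide (m.g = a)) ≤ W.card) ∧
      (∀ a ∈ T1.carrier, ∀ a' ∈ T1.carrier,
        (a ∈ T1.carrier \ T.carrier ∨ a' ∈ T1.carrier \ T.carrier) →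
        T1'.b a a' = T1.b a a') ∧
      (∀ a ∈ T.carrier, ∀ a' ∈ T.carrier, T1'.b a a' = TA.b a a') ∧
      (∀ (k : Fin n), ∀ a ∈ T1.carrier, TA.b (T.s k) a = T.b (T.s k) a) ∧
      (∀ r ∈ T1.carrier \ T2.carrier, ∀ a ∈ T1.carrier, TB.b r a = Tm.b r a) ∧
      (∀ (k : Fin n), ∀ a ∈ T1.carrier, TB.b (T.s k) a = Tm.b (T.s k) a) := by
  classical
  -- basic facts
  have hsub1c : T.carrier ⊆ T1.carrier := by
    intro a ha
    rcases Finset.mem_union.1 ha with h | h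
    · rcases Finset.mem_biUnion.1 h with ⟨k, _, hk⟩
      exact memG_carrier (hGsub1 k hk)
    · exact memI_carrier (hIsub1 h)
  have hsub2c : T2.carrier ⊆ T1.carrier := by
    intro a ha
    rcases Finset.mem_union.1 ha with h | h
    · rcases Finset.mem_biUnion.1 h with ⟨k, _, hk⟩
      exact memG_carrier (hGsub2 k hk)
    · exact memI_carrier (hIsub2 h)
  have hΩm : Tm.carrier = T1.carrier := by
    unfold WovenBasedMatrix.carrier; rw [hTmG, hTmI]
  set AA : Finset α := T1.carrier \ T.carrier with hAA
  set RR : Finset α := T1.carrier \ T2.carrier with hRR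
  set GElems : Finset α :=
    (Finset.univ.biUnion T1.G).filter (fun g => ∀ k, g ≠ T1.s k) with hGEdef
  have hGEnotI : ∀ a ∈ GElems, a ∉ T1.I := by
    intro a ha haI
    rcases Finset.mem_biUnion.1 (Finset.mem_filter.1 ha).1 with ⟨k, _, hk⟩
    exact (Finset.disjoint_left.1 (T1.disjointI k) hk) haI
  have hGEcar : ∀ a ∈ GElems, a ∈ T1.carrier :=
    fun a ha => Finset.mem_union_left _ (Finset.mem_filter.1 ha).1
  have hsGE : ∀ k : Fin n, T1.s k ∉ GElems := by
    intro k hk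
    exact (Finset.mem_filter.1 hk).2 k rfl
  have hsnotI : ∀ k : Fin n, T1.s k ∉ T1.I := by
    intro k hk
    exact (Finset.disjoint_left.1 (T1.disjointI k) (T1.s_mem k)) hk
  have hvalGE : ∀ m ∈ N, m.g ∈ GElems := by
    intro m hm
    refine Finset.mem_filter.2 ⟨Finset.mem_biUnion.2 ⟨m.j, Finset.mem_univ _, (hNval m hm).1⟩,
      fun k => valid_g_ne_s (hNval m hm) k⟩
  -- choice of part index for each non-base element
  have hjOf0 : ∀ g : {x // x ∈ GElems}, ∃ k, g.1 ∈ T1.G k := by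
    rintro ⟨a, ha⟩
    rcases Finset.mem_biUnion.1 (Finset.mem_filter.1 ha).1 with ⟨k, _, hk⟩
    exact ⟨k, hk⟩
  choose jOf hjOf using hjOf0
  have hgs : ∀ g : {x // x ∈ GElems}, ∀ k, g.1 ≠ T1.s k :=
    fun g k => (Finset.mem_filter.1 g.2).2 k
  have hjuniq : ∀ (g : {x // x ∈ GElems}) (k : Fin n), g.1 ∈ T1.G k → k = jOf g := by
    intro g k hk
    by_contra hne
    exact (Finset.disjoint_left.1 (T1.disjointG k (jOf g) hne) hk) (hjOf g)
  set sOf : α → α := fun a => if h : a ∈ GElems then T1.s (jOf ⟨a, h⟩) else a with hsOfdef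
  have hsOfval : ∀ (g : {x // x ∈ GElems}), sOf g.1 = T1.s (jOf g) := by
    rintro ⟨a, h⟩
    simp only [hsOfdef]
    rw [dif_pos h]
  -- the flip sets
  set VV : {x // x ∈ GElems} → Finset α :=
    fun g => T1.I.filter (fun x => ¬ T1.b g.1 x = Tm.b g.1 x) with hVVdef
  -- per-element pairing from the matching lemma
  have hper : ∀ g : {x // x ∈ GElems},
      (∀ x ∈ VV g, T1.b (T1.s (jOf g)) x ≠ 0 ∧
        Tm.b g.1 x = T1.b (T1.s (jOf g)) x - T1.b g.1 x ∧
        (T1.b g.1 x = 0 ∨ T1.b g.1 x = T1.b (T1.s (jOf g)) x)) ∧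
      ∃ P : List (α × α),
        (∀ p ∈ P, p.1 ∈ VV g ∧ p.2 ∈ VV g ∧ p.1 ≠ p.2 ∧
          Compat (fun x => T1.b (T1.s (jOf g)) x) (fun x => T1.b g.1 x) p.1 p.2) ∧
        P.Pairwise (fun p q => p.1 ≠ q.1 ∧ p.1 ≠ q.2 ∧ p.2 ≠ q.1 ∧ p.2 ≠ q.2) ∧
        (∀ x ∈ VV g, ∃ p ∈ P, x = p.1 ∨ x = p.2) := by
    intro g
    set σ : α → H := fun x => T1.b (T1.s (jOf g)) x with hσdef
    set r0 : α → H := fun x => T1.b g.1 x with hr0def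
    set r1 : α → H := fun x => Tm.b g.1 x with hr1def
    have hval0 : ∀ x ∈ T1.I, r0 x = 0 ∨ r0 x = σ x :=
      fun x hx => T1.weave_val (jOf g) g.1 (hjOf g) x hx
    obtain ⟨hval1, hQinv, hQpar⟩ := rowInv T1 g.1 (jOf g) (hjOf g) σ N T1.b hNval hNapp
      hval0 (fun x _ => rfl)
    have hr1eq : ∀ x ∈ T1.I, r1 x = applyMoves T1.s N T1.b g.1 x :=
      fun x hx => hTmb g.1 (memG_carrier (hjOf g)) x (memI_carrier hx)
    have hval1' : ∀ x ∈ T1.I, r1 x = 0 ∨ r1 x = σ x :=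
      fun x hx => by rw [hr1eq x hx]; exact hval1 x hx
    have hVeq : VV g = T1.I.filter (fun x => ¬ r0 x = r1 x) := rfl
    obtain ⟨hVfact, hQcard, hVsplit⟩ := bridge σ r0 r1 T1.I (VV g) hVeq hval0 hval1'
    have hcongr : ∀ c : H, cntQ σ (fun x => applyMoves T1.s N T1.b g.1 x) T1.I c =
        cntQ σ r1 T1.I c :=
      fun c => cntQ_congr (fun x hx => (hr1eq x hx).symm) c
    constructor
    · intro x hx
      obtain ⟨h1, h2, h3⟩ := hVfact x hx
      exact ⟨h1, h2, h3⟩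
    · apply matching σ r0 (VV g).card (VV g) le_rfl
        (fun x hx => (hVfact x hx).1) (fun x hx => (hVfact x hx).2.2)
      · intro c hc
        have i1 := hQcard c hc
        have i2 := hQcard (-c) (neg_ne_zero.2 hc)
        have i3 := hQinv c hc
        rw [hcongr c, hcongr (-c)] at i3
        linarith [i1, i2, i3]
      · intro c hc htc
        have i1 := hQcard c hc
        have i2 := hQpar c hc htc
        rw [hcongr c] at i2
        obtain ⟨t, ht⟩ := i2
        have i3 : (((VV g).filter fun z => σ z = c).card : ℤ) =
            (((VV g).filter fun z => σ z = c ∧ r0 z = 0).card : ℤ) +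
            (((VV g).filter fun z => σ z = c ∧ ¬ r0 z = 0).card : ℤ) := by
          exact_mod_cast congrArg (Nat.cast : ℕ → ℤ) (hVsplit c)
        have h2 : (2:ℤ) ∣ (((VV g).filter fun z => σ z = c).card : ℤ) :=
          ⟨t + ((VV g).filter fun z => σ z = c ∧ ¬ r0 z = 0).card, by push_cast; linarith⟩
        exact_mod_cast h2
    done
  choose Pg hPg using fun g => (hper g).2
  have hVfact := fun g => (hper g).1
  -- phases and move lists
  set phase : α → (α × α) → ℕ := fun a p =>
    if a ∈ AA ∨ p.1 ∈ AA ∨ p.2 ∈ AA then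
      (if a ∈ RR ∨ p.1 ∈ RR ∨ p.2 ∈ RR then 2 else 3) else 1 with hphasedef
  set sqOf : {x // x ∈ GElems} → (α × α) → Fin 2 := fun g p =>
    if (T1.b (T1.s (jOf g)) p.1 + T1.b (T1.s (jOf g)) p.2 = 0 ∧
        T1.b g.1 p.1 + T1.b g.1 p.2 = 0) then 0 else 1 with hsqdef
  set toMove : {x // x ∈ GElems} → (α × α) → MoveDatum α n :=
    fun g p => ⟨jOf g, sqOf g p, g.1, p.1, p.2⟩ with htoMovedef
  set Glist : List {x // x ∈ GElems} := GElems.attach.toList with hGLdef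
  set blk : ℕ → {x // x ∈ GElems} → List (MoveDatum α n) :=
    fun k g => ((Pg g).filter (fun p => phase g.1 p = k)).map (toMove g) with hblkdef
  set NL : ℕ → List (MoveDatum α n) := fun k => Glist.flatMap (blk k) with hNLdef
  have hNLmem : ∀ (k : ℕ) (m : MoveDatum α n), m ∈ NL k ↔
      ∃ (g : {x // x ∈ GElems}) (p : α × α), p ∈ Pg g ∧ phase g.1 p = k ∧
        m = toMove g p := by
    intro k m
    simp only [hNLdef, hblkdef, List.mem_flatMap, List.mem_map, List.mem_filter,
      decide_eq_true_eq]
    constructor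
    · rintro ⟨g, _, p, ⟨hp, hph⟩, rfl⟩
      exact ⟨g, p, hp, hph, rfl⟩
    · rintro ⟨g, p, hp, hph, rfl⟩
      exact ⟨g, by rw [hGLdef]; exact Finset.mem_toList.2 (Finset.mem_attach _ _),
        p, ⟨hp, hph⟩, rfl⟩
  have hcompP : ∀ (g : {x // x ∈ GElems}) (p : α × α), p ∈ Pg g →
      p.1 ∈ VV g ∧ p.2 ∈ VV g ∧ p.1 ≠ p.2 ∧
        Compat (fun x => T1.b (T1.s (jOf g)) x) (fun x => T1.b g.1 x) p.1 p.2 :=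
    fun g p hp => (hPg g).1 p hp
  have hVI : ∀ (g : {x // x ∈ GElems}) (x : α), x ∈ VV g → x ∈ T1.I :=
    fun g x hx => (Finset.mem_filter.1 hx).1
  have hphase_cases : ∀ a p, phase a p = 1 ∨ phase a p = 2 ∨ phase a p = 3 := by
    intro a p; simp only [hphasedef]; split_ifs <;> simp
  have hphase1 : ∀ a p, phase a p = 1 → ¬(a ∈ AA ∨ p.1 ∈ AA ∨ p.2 ∈ AA) := by
    intro a p h hA; simp only [hphasedef] at h; rw [if_pos hA] at h
    split_ifs at h <;> omega
  have hphase2 : ∀ a p, phase a p = 2 →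
      (a ∈ AA ∨ p.1 ∈ AA ∨ p.2 ∈ AA) ∧ (a ∈ RR ∨ p.1 ∈ RR ∨ p.2 ∈ RR) := by
    intro a p h; simp only [hphasedef] at h
    split_ifs at h with h1 h2
    · exact ⟨h1, h2⟩
    · omega
    · omega
  have hphase3 : ∀ a p, phase a p = 3 → ¬(a ∈ RR ∨ p.1 ∈ RR ∨ p.2 ∈ RR) := by
    intro a p h hR; simp only [hphasedef] at h
    split_ifs at h <;> omega
  have hLOk : ∀ k : ℕ, LOk T.s sOf GElems T1.I (NL k) := by
    intro k
    constructor
    · intro m hm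
      obtain ⟨g, p, hp, hph, rfl⟩ := (hNLmem k m).1 hm
      obtain ⟨h1, h2, h3, _⟩ := hcompP g p hp
      refine ⟨g.2, hVI g _ h1, hVI g _ h2, h3, ?_, ?_, ?_⟩
      · show sOf g.1 = T.s (jOf g)
        rw [hsOfval g, hs1]
      · show T.s (jOf g) ∉ GElems
        rw [← hs1]; exact hsGE _
      · show T.s (jOf g) ∉ T1.I
        rw [← hs1]; exact hsnotI _
    · intro a ha hai; exact hGEnotI a ha hai
    · apply pairwise_flatMap_of
      · intro g _
        apply List.Pairwise.map
        · intro p q hpq _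
          exact hpq
        · exact List.Pairwise.sublist (List.filter_sublist) (hPg g).2.1
      · have hnd : Glist.Pairwise (· ≠ ·) := by rw [hGLdef]; exact (Finset.nodup_toList _)
        apply List.Pairwise.imp ?_ hnd
        intro g g' hne m hm m' hm'
        simp only [hblkdef, List.mem_map, List.mem_filter] at hm hm'
        obtain ⟨p, _, rfl⟩ := hm
        obtain ⟨q, _, rfl⟩ := hm'
        intro heq
        exact absurd (Subtype.ext heq) hne
  have hblkg : ∀ (k : ℕ) (g : {x // x ∈ GElems}) (m : MoveDatum α n),
      m ∈ blk k g → m.g = g.1 := by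
    intro k g m hm
    simp only [hblkdef, List.mem_map, List.mem_filter] at hm
    obtain ⟨p, _, rfl⟩ := hm
    rfl
  have hcross : ∀ (k k' : ℕ), k ≠ k' → ∀ a x, x ∈ DofL (NL k) a →
      x ∉ DofL (NL k') a := by
    intro k k' hkk a x hx hx'
    rcases mem_DofL.1 hx with ⟨m, hm, hmg, hmx⟩
    rcases mem_DofL.1 hx' with ⟨m', hm', hmg', hmx'⟩
    obtain ⟨g, p, hp, hph, rfl⟩ := (hNLmem k m).1 hm
    obtain ⟨g', q, hq, hph', rfl⟩ := (hNLmem k' m').1 hm'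
    have hgg : g = g' := Subtype.ext (hmg.trans hmg'.symm)
    subst hgg
    have hpq : p ≠ q := fun h => hkk (by rw [← hph, h, hph'])
    have hdisj := pairwise_forall_of_symm (hPg g).2.1
      (fun x y h => ⟨h.1.symm, h.2.2.1.symm, h.2.1.symm, h.2.2.2.symm⟩) p hp q hq hpq
    have hmx1 : x = p.1 ∨ x = p.2 := hmx
    have hmx2 : x = q.1 ∨ x = q.2 := hmx'
    rcases hdisj with ⟨a1, a2, a3, a4⟩ | ⟨a1, a2, a3, a4⟩ <;>
      rcases hmx1 with h1 | h1 <;> rcases hmx2 with h2 | h2 <;>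
      rw [h1] at h2 <;>
      first
        | exact a1 h2 | exact a2 h2 | exact a3 h2 | exact a4 h2
        | exact a1 h2.symm | exact a2 h2.symm | exact a3 h2.symm | exact a4 h2.symm
  set D12 : α → Finset α := fun a => DofL (NL 1) a ∪ DofL (NL 2) a with hD12def
  set D123 : α → Finset α := fun a => D12 a ∪ DofL (NL 3) a with hD123def
  have hDtot : ∀ a x, x ∈ D123 a ↔ ∃ h : a ∈ GElems, x ∈ VV ⟨a, h⟩ := by
    intro a x
    constructor
    · intro hx
      have hex : ∃ k, x ∈ DofL (NL k) a := by
        rcases Finset.mem_union.1 hx with h | h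
        · rcases Finset.mem_union.1 h with h | h
          exacts [⟨1, h⟩, ⟨2, h⟩]
        · exact ⟨3, h⟩
      obtain ⟨k, hk⟩ := hex
      rcases mem_DofL.1 hk with ⟨m, hm, hmg, hmx⟩
      obtain ⟨g, p, hp, hph, rfl⟩ := (hNLmem k m).1 hm
      have hge : a ∈ GElems := hmg ▸ g.2
      refine ⟨hge, ?_⟩
      have hgeq : (⟨a, hge⟩ : {x // x ∈ GElems}) = g := Subtype.ext hmg.symm
      rw [hgeq]
      obtain ⟨h1, h2, _, _⟩ := hcompP g p hp
      rcases hmx with h | h <;> rw [show x = _ from h]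
      · exact h1
      · exact h2
    · rintro ⟨ha, hx⟩
      obtain ⟨p, hp, hxp⟩ := (hPg ⟨a, ha⟩).2.2 x hx
      have hmem : ∀ k : ℕ, phase a p = k → x ∈ DofL (NL k) a := by
        intro k hk
        exact mem_DofL.2 ⟨toMove ⟨a, ha⟩ p,
          (hNLmem k _).2 ⟨⟨a, ha⟩, p, hp, hk, rfl⟩, rfl, hxp⟩
      rcases hphase_cases a p with h | h | h
      · exact Finset.mem_union_left _ (Finset.mem_union_left _ (hmem 1 h))
      · exact Finset.mem_union_left _ (Finset.mem_union_right _ (hmem 2 h))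
      · exact Finset.mem_union_right _ (hmem 3 h)
  have hDI0 : ∀ (k : ℕ) (x : α), x ∈ T1.I → ∀ y, y ∉ DofL (NL k) x := by
    intro k x hx y hy
    rcases mem_DofL.1 hy with ⟨m, hm, hmg, _⟩
    obtain ⟨g, p, _, _, rfl⟩ := (hNLmem k m).1 hm
    exact hGEnotI g.1 g.2 (by rw [show g.1 = x from hmg]; exact hx)
  have hDs0 : ∀ (k : ℕ) (k' : Fin n) (y : α), y ∉ DofL (NL k) (T1.s k') := by
    intro k k' y hy
    rcases mem_DofL.1 hy with ⟨m, hm, hmg, _⟩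
    obtain ⟨g, p, _, _, rfl⟩ := (hNLmem k m).1 hm
    exact hsGE k' (by rw [← show g.1 = T1.s k' from hmg]; exact g.2)
  have hD123facts : ∀ a x, x ∈ D123 a → a ∈ GElems ∧ x ∈ T1.I := by
    intro a x hx
    obtain ⟨h, hxV⟩ := (hDtot a x).1 hx
    exact ⟨h, hVI _ x hxV⟩
  -- master value identity
  have hmaster : ∀ a ∈ T1.carrier, ∀ a' ∈ T1.carrier,
      flips sOf D123 T1.b a a' = Tm.b a a' := by
    intro a ha a' ha'
    by_cases hc1 : a' ∈ D123 a
    · obtain ⟨hge, hxV⟩ := (hDtot a a').1 hc1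
      obtain ⟨hσ0, hval, _⟩ := hVfact ⟨a, hge⟩ a' hxV
      rw [flips_pos1 hc1, hval, hsOfval ⟨a, hge⟩]
    · by_cases hc2 : a ∈ D123 a'
      · obtain ⟨hge, hxV⟩ := (hDtot a' a).1 hc2
        obtain ⟨hσ0, hval, _⟩ := hVfact ⟨a', hge⟩ a hxV
        rw [flips_pos2 hc1 hc2, hsOfval ⟨a', hge⟩]
        have hsmem : T1.s (jOf ⟨a', hge⟩) ∈ T1.carrier := memG_carrier (T1.s_mem _)
        have e1 : Tm.b a a' = - Tm.b a' a :=
          Tm.skew a (by show a ∈ Tm.carrier; rw [hΩm]; exact ha) a' (by show a' ∈ Tm.carrier; rw [hΩm]; exact ha')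
        rw [e1, hval, T1.skew a ha _ hsmem, T1.skew a ha a' ha']
        abel
      · rw [flips_of_not hc1 hc2]
        by_cases hga : a ∈ GElems ∧ a' ∈ T1.I
        · have : a' ∉ VV ⟨a, hga.1⟩ := fun h => hc1 ((hDtot a a').2 ⟨hga.1, h⟩)
          simp only [hVVdef, Finset.mem_filter, not_and, not_not] at this
          exact this hga.2
        · by_cases hga' : a' ∈ GElems ∧ a ∈ T1.I
          · have : a ∉ VV ⟨a', hga'.1⟩ := fun h => hc2 ((hDtot a' a).2 ⟨hga'.1, h⟩)
            simp only [hVVdef, Finset.mem_filter, not_and, not_not] at this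
            have e0 := (this hga'.2)
            have e1 : Tm.b a a' = - Tm.b a' a :=
              Tm.skew a (by show a ∈ Tm.carrier; rw [hΩm]; exact ha) a' (by show a' ∈ Tm.carrier; rw [hΩm]; exact ha')
            rw [e1, ← e0]
            exact T1.skew a ha a' ha'
          · rw [hTmb a ha a' ha']
            symm
            apply applyMoves_untouched
            intro m hm
            constructor
            · rintro ⟨h1, h2⟩
              apply hga
              constructor
              · rw [h1]; exact hvalGE m hm
              · rcases h2 with h2 | h2 <;> rw [h2]
                · exact (hNval m hm).2.2.1
                · exact (hNval m hm).2.2.2.1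
            · rintro ⟨h1, h2⟩
              apply hga'
              constructor
              · rw [h1]; exact hvalGE m hm
              · rcases h2 with h2 | h2 <;> rw [h2]
                · exact (hNval m hm).2.2.1
                · exact (hNval m hm).2.2.2.1
  -- old-carrier helpers
  have hskeq : ∀ k, T1.s k = T.s k := fun k => congrFun hs1 k
  have hnotAA : ∀ a, a ∈ T1.carrier → a ∉ AA → a ∈ T.carrier := by
    intro a ha hA
    by_contra hc
    exact hA (Finset.mem_sdiff.2 ⟨ha, hc⟩)
  have hinAA : ∀ a, a ∈ T.carrier → a ∉ AA := by
    intro a ha hA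
    exact (Finset.mem_sdiff.1 hA).2 ha
  have hnotRR : ∀ a, a ∈ T1.carrier → a ∉ RR → a ∈ T2.carrier := by
    intro a ha hR
    by_contra hc
    exact hR (Finset.mem_sdiff.2 ⟨ha, hc⟩)
  have hGET : ∀ (g : {x // x ∈ GElems}), g.1 ∈ T.carrier → g.1 ∈ T.G (jOf g) := by
    intro g hg
    rcases Finset.mem_union.1 hg with h | h
    · rcases Finset.mem_biUnion.1 h with ⟨k, _, hk⟩
      rw [← hjuniq g k (hGsub1 k hk)]
      exact hk
    · exact absurd (hIsub1 h) (hGEnotI g.1 g.2)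
  have hGET2 : ∀ (g : {x // x ∈ GElems}), g.1 ∈ T2.carrier → g.1 ∈ T2.G (jOf g) := by
    intro g hg
    rcases Finset.mem_union.1 hg with h | h
    · rcases Finset.mem_biUnion.1 h with ⟨k, _, hk⟩
      rw [← hjuniq g k (hGsub2 k hk)]
      exact hk
    · exact absurd (hIsub2 h) (hGEnotI g.1 g.2)
  have hIT : ∀ x, x ∈ T1.I → x ∈ T.carrier → x ∈ T.I := by
    intro x hx hxc
    rcases Finset.mem_union.1 hxc with h | h
    · rcases Finset.mem_biUnion.1 h with ⟨k, _, hk⟩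
      exact absurd hx (Finset.disjoint_left.1 (T1.disjointI k) (hGsub1 k hk))
    · exact h
  have hIT2 : ∀ x, x ∈ T1.I → x ∈ T2.carrier → x ∈ T2.I := by
    intro x hx hxc
    rcases Finset.mem_union.1 hxc with h | h
    · rcases Finset.mem_biUnion.1 h with ⟨k, _, hk⟩
      exact absurd hx (Finset.disjoint_left.1 (T1.disjointI k) (hGsub2 k hk))
    · exact h
  have hsnotIT : ∀ k : Fin n, T.s k ∉ T.I := by
    intro k hk
    exact (Finset.disjoint_left.1 (T.disjointI k) (T.s_mem k)) hk
  have hsTcar : ∀ k : Fin n, T.s k ∈ T.carrier := fun k => memG_carrier (T.s_mem k)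
  have hsΩ : ∀ k : Fin n, T.s k ∈ T1.carrier := fun k => hsub1c (hsTcar k)
  -- projections of toMove (definitionally transparent)
  have htmg : ∀ g p, (toMove g p).g = g.1 := fun _ _ => rfl
  have htmj : ∀ g p, (toMove g p).j = jOf g := fun _ _ => rfl
  have htmx1 : ∀ g p, (toMove g p).x1 = p.1 := fun _ _ => rfl
  have htmx2 : ∀ g p, (toMove g p).x2 = p.2 := fun _ _ => rfl
  -- functional form of the three phase lists
  have hfe : ∀ (k : ℕ) (b : α → α → H),
      applyMoves T.s (NL k) b = flips sOf (DofL (NL k)) b :=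
    fun k b => applyMoves_eq_flips (NL k) (hLOk k) b
  have hDmem : ∀ (k : ℕ) (g : {x // x ∈ GElems}) (p : α × α), p ∈ Pg g →
      phase g.1 p = k → p.1 ∈ DofL (NL k) g.1 ∧ p.2 ∈ DofL (NL k) g.1 := by
    intro k g p hp hph
    constructor <;> exact mem_DofL.2 ⟨toMove g p, (hNLmem k _).2 ⟨g, p, hp, hph, rfl⟩,
      rfl, by simp [htmx1, htmx2]⟩
  -- the decomposition facts for a given D-membership
  have hDval : ∀ (k : ℕ) (u x : α), x ∈ DofL (NL k) u →
      ∃ (hu : u ∈ GElems) (p : α × α), p ∈ Pg ⟨u, hu⟩ ∧ phase u p = k ∧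
        (x = p.1 ∨ x = p.2) := by
    intro k u x hx
    rcases mem_DofL.1 hx with ⟨m, hm, hmg, hmx⟩
    obtain ⟨g, p, hp, hph, rfl⟩ := (hNLmem k m).1 hm
    have hu : u ∈ GElems := by rw [← show g.1 = u from hmg]; exact g.2
    have hgeq : (⟨u, hu⟩ : {x // x ∈ GElems}) = g := Subtype.ext (show g.1 = u from hmg).symm
    refine ⟨hu, p, by rw [hgeq]; exact hp, by rw [show g.1 = u from hmg] at hph; exact hph, hmx⟩
  -- elements touched by phase 1 are old
  have hD1old : ∀ u x, x ∈ DofL (NL 1) u → u ∉ AA ∧ x ∉ AA := by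
    intro u x hx
    obtain ⟨hu, p, hp, hph, hxp⟩ := hDval 1 u x hx
    have hnA := hphase1 u p hph
    push_neg at hnA
    exact ⟨hnA.1, by rcases hxp with h | h <;> rw [h]; exacts [hnA.2.1, hnA.2.2]⟩
  -- elements touched by phase 3 avoid RR
  have hD3new : ∀ u x, x ∈ DofL (NL 3) u → u ∉ RR ∧ x ∉ RR := by
    intro u x hx
    obtain ⟨hu, p, hp, hph, hxp⟩ := hDval 3 u x hx
    have hnR := hphase3 u p hph
    push_neg at hnR
    exact ⟨hnR.1, by rcases hxp with h | h <;> rw [h]; exacts [hnR.2.1, hnR.2.2]⟩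
  have hDT1 : ∀ (k : ℕ) (g x : α), x ∈ DofL (NL k) g →
      (∃ k', g ∈ T1.G k' ∧ g ≠ T1.s k' ∧ sOf g = T1.s k') ∧ x ∈ T1.I := by
    intro k g x hx
    obtain ⟨hu, p, hp, hph, hxp⟩ := hDval k g x hx
    obtain ⟨h1, h2, _, _⟩ := hcompP ⟨g, hu⟩ p hp
    refine ⟨⟨jOf ⟨g, hu⟩, hjOf ⟨g, hu⟩, hgs ⟨g, hu⟩ _, hsOfval ⟨g, hu⟩⟩, ?_⟩
    rcases hxp with h | h <;> rw [h]
    · exact hVI _ _ h1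
    · exact hVI _ _ h2
  -- phase 1: D-facts over T
  have hD1T : ∀ (g x : α), x ∈ DofL (NL 1) g →
      (∃ k', g ∈ T.G k' ∧ g ≠ T.s k' ∧ sOf g = T.s k') ∧ x ∈ T.I := by
    intro g x hx
    obtain ⟨hgold, hxold⟩ := hD1old g x hx
    obtain ⟨hu, p, hp, hph, hxp⟩ := hDval 1 g x hx
    have hgT : g ∈ T.carrier := hnotAA g (hGEcar g hu) hgold
    have hxI1 : x ∈ T1.I := (hDT1 1 g x hx).2
    have hxT : x ∈ T.carrier := hnotAA x (memI_carrier hxI1) hxold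
    refine ⟨⟨jOf ⟨g, hu⟩, hGET ⟨g, hu⟩ hgT, ?_, ?_⟩, hIT x hxI1 hxT⟩
    · intro h; exact hgs ⟨g, hu⟩ (jOf ⟨g, hu⟩) (h.trans (hskeq _).symm)
    · rw [hsOfval ⟨g, hu⟩, hskeq]
  -- construct TA
  obtain ⟨TA, hTAG, hTAI, hTAs, hTAb⟩ := WBM_mk T sOf (DofL (NL 1)) hD1T
    (applyMoves T.s (NL 1) T.b) (fun a _ a' _ => by rw [hfe 1])
  -- s-rows of TA agree with T
  have hE3 : ∀ (k : Fin n), ∀ a ∈ T1.carrier, TA.b (T.s k) a = T.b (T.s k) a := by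
    intro k a _
    rw [hTAb, hfe 1, flips_of_not]
    · rw [← hskeq k]; exact hDs0 1 k a
    · intro h
      exact hsnotIT k (hD1T a (T.s k) h).2
  -- the hybrid matrix T1'
  set b1' : α → α → H := fun a a' =>
    if a ∈ AA ∨ a' ∈ AA then T1.b a a' else applyMoves T.s (NL 1) T.b a a' with hb1def
  have hb1flips : ∀ a ∈ T1.carrier, ∀ a' ∈ T1.carrier,
      b1' a a' = flips sOf (DofL (NL 1)) T1.b a a' := by
    intro a ha a' ha'
    simp only [hb1def]
    by_cases hA : a ∈ AA ∨ a' ∈ AA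
    · rw [if_pos hA, flips_of_not]
      · intro h
        rcases hA with hA | hA
        · exact (hD1old a a' h).1 hA
        · exact (hD1old a a' h).2 hA
      · intro h
        rcases hA with hA | hA
        · exact (hD1old a' a h).2 hA
        · exact (hD1old a' a h).1 hA
    · push_neg at hA
      rw [if_neg (by push_neg; exact hA), hfe 1]
      have haT : a ∈ T.carrier := hnotAA a ha hA.1
      have ha'T : a' ∈ T.carrier := hnotAA a' ha' hA.2
      exact flips_congr sOf (DofL (NL 1)) T.b T1.b T.carrier
        (fun u v hv => by
          obtain ⟨⟨k', _, _, hsk⟩, _⟩ := hD1T u v hv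
          rw [hsk]; exact hsTcar k')
        (fun u hu v hv => (hag1 u hu v hv).symm) a a' haT ha'T
  obtain ⟨T1', hT1G, hT1I, hT1s, hT1b⟩ := WBM_mk T1 sOf (DofL (NL 1)) (hDT1 1) b1'
    (fun a ha a' ha' => by rw [hb1flips a ha a' ha'])
  have hE1 : ∀ a ∈ T1.carrier, ∀ a' ∈ T1.carrier,
      (a ∈ AA ∨ a' ∈ AA) → T1'.b a a' = T1.b a a' := by
    intro a _ a' _ hA
    rw [hT1b]
    simp only [hb1def]
    rw [if_pos hA]
  have hE2 : ∀ a ∈ T.carrier, ∀ a' ∈ T.carrier, T1'.b a a' = TA.b a a' := by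
    intro a ha a' ha'
    rw [hT1b, hTAb]
    simp only [hb1def]
    rw [if_neg (by push_neg; exact ⟨hinAA a ha, hinAA a' ha'⟩)]
  -- values of T1' at phase ≥ 2 positions
  have hT1'g : ∀ (g : {x // x ∈ GElems}) (p : α × α) (k : ℕ), p ∈ Pg g →
      phase g.1 p = k → k ≠ 1 →
      T1'.b g.1 p.1 = T1.b g.1 p.1 ∧ T1'.b g.1 p.2 = T1.b g.1 p.2 := by
    intro g p k hp hph hk
    obtain ⟨h1, h2, _, _⟩ := hcompP g p hp
    have hIx1 := hVI g _ h1
    have hIx2 := hVI g _ h2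
    have hmem := hDmem k g p hp hph
    have ha := hGEcar g.1 g.2
    constructor
    · rw [hT1b, hb1flips g.1 ha p.1 (memI_carrier hIx1), flips_of_not]
      · exact fun h => hcross k 1 hk g.1 p.1 hmem.1 h
      · exact hDI0 1 p.1 hIx1 g.1
    · rw [hT1b, hb1flips g.1 ha p.2 (memI_carrier hIx2), flips_of_not]
      · exact fun h => hcross k 1 hk g.1 p.2 hmem.2 h
      · exact hDI0 1 p.2 hIx2 g.1
  have hT1's : ∀ (k : Fin n) (x : α), x ∈ T1.I → T1'.b (T.s k) x = T1.b (T.s k) x := by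
    intro k x hx
    rw [hT1b, hb1flips (T.s k) (hsΩ k) x (memI_carrier hx), flips_of_not]
    · rw [← hskeq k]; exact hDs0 1 k x
    · exact hDI0 1 x hx (T.s k)
  -- base applicability of constructed moves
  have hbaseapp : ∀ (g : {x // x ∈ GElems}) (p : α × α), p ∈ Pg g →
      MoveApplicable (sqOf g p) T1.b (T.s (jOf g)) g.1 p.1 p.2 := by
    intro g p hp
    obtain ⟨_, _, _, hcom⟩ := hcompP g p hp
    unfold MoveApplicable
    simp only [hsqdef]
    by_cases hc : (T1.b (T1.s (jOf g)) p.1 + T1.b (T1.s (jOf g)) p.2 = 0 ∧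
        T1.b g.1 p.1 + T1.b g.1 p.2 = 0)
    · rw [if_pos hc, if_pos rfl]
      exact ⟨hc.2, by rw [← hskeq (jOf g)]; exact hc.1⟩
    · rw [if_neg hc, if_neg (by decide)]
      rcases hcom with hL | hR
      · exact absurd ⟨hL.1, hL.2⟩ hc
      · exact ⟨hR.2, by rw [← hskeq (jOf g)]; exact hR.1⟩
  -- N1 conclusions
  have hN1val : ∀ m ∈ NL 1, m.valid T := by
    intro m hm
    obtain ⟨g, p, hp, hph, rfl⟩ := (hNLmem 1 m).1 hm
    have hnA := hphase1 g.1 p hph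
    push_neg at hnA
    obtain ⟨h1, h2, h3, _⟩ := hcompP g p hp
    have hgT : g.1 ∈ T.carrier := hnotAA _ (hGEcar _ g.2) hnA.1
    have hx1T : p.1 ∈ T.carrier := hnotAA _ (memI_carrier (hVI g _ h1)) hnA.2.1
    have hx2T : p.2 ∈ T.carrier := hnotAA _ (memI_carrier (hVI g _ h2)) hnA.2.2
    exact ⟨hGET g hgT, fun h => hgs g _ (h.trans (hskeq _).symm),
      hIT _ (hVI g _ h1) hx1T, hIT _ (hVI g _ h2) hx2T, h3⟩
  have hN1app : movesApplicable T.s (NL 1) T.b := by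
    apply movesApplicable_of_LOk (NL 1) (hLOk 1) T.b T1.b ?_ ?_
    · intro m hm
      obtain ⟨g, p, hp, hph, rfl⟩ := (hNLmem 1 m).1 hm
      have hnA := hphase1 g.1 p hph
      push_neg at hnA
      obtain ⟨h1, h2, h3, _⟩ := hcompP g p hp
      have hgT : g.1 ∈ T.carrier := hnotAA _ (hGEcar _ g.2) hnA.1
      have hx1T : p.1 ∈ T.carrier := hnotAA _ (memI_carrier (hVI g _ h1)) hnA.2.1
      have hx2T : p.2 ∈ T.carrier := hnotAA _ (memI_carrier (hVI g _ h2)) hnA.2.2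
      exact ⟨(hag1 _ hgT _ hx1T).symm, (hag1 _ hgT _ hx2T).symm,
        (hag1 _ (hsTcar _) _ hx1T).symm, (hag1 _ (hsTcar _) _ hx2T).symm⟩
    · intro m hm
      obtain ⟨g, p, hp, _, rfl⟩ := (hNLmem 1 m).1 hm
      exact hbaseapp g p hp
  -- N2 conclusions
  have hN2val : ∀ m ∈ NL 2, m.valid T1' := by
    intro m hm
    obtain ⟨g, p, hp, hph, rfl⟩ := (hNLmem 2 m).1 hm
    obtain ⟨h1, h2, h3, _⟩ := hcompP g p hp
    exact ⟨by rw [hT1G]; exact hjOf g, by rw [hT1s]; exact hgs g _,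
      by rw [hT1I]; exact hVI g _ h1, by rw [hT1I]; exact hVI g _ h2, h3⟩
  have hN2app : movesApplicable T1'.s (NL 2) T1'.b := by
    rw [hT1s, hs1]
    apply movesApplicable_of_LOk (NL 2) (hLOk 2) T1'.b T1.b ?_ ?_
    · intro m hm
      obtain ⟨g, p, hp, hph, rfl⟩ := (hNLmem 2 m).1 hm
      obtain ⟨h1, h2, _, _⟩ := hcompP g p hp
      obtain ⟨e1, e2⟩ := hT1'g g p 2 hp hph (by omega)
      exact ⟨e1, e2, hT1's _ _ (hVI g _ h1), hT1's _ _ (hVI g _ h2)⟩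
    · intro m hm
      obtain ⟨g, p, hp, _, rfl⟩ := (hNLmem 2 m).1 hm
      exact hbaseapp g p hp
  -- TB
  have hDOk : ∀ k : ℕ, DOk sOf (DofL (NL k)) GElems T1.I := fun k => LOk_DOk (hLOk k)
  have hDOk12 : DOk sOf D12 GElems T1.I := by
    constructor
    · intro g x hx
      rcases Finset.mem_union.1 hx with h | h
      · exact (hDOk 1).mem g x h
      · exact (hDOk 2).mem g x h
    · rintro g ⟨x, hx⟩
      rcases Finset.mem_union.1 hx with h | h
      · exact (hDOk 1).sNot g ⟨x, h⟩
      · exact (hDOk 2).sNot g ⟨x, h⟩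
    · exact (hDOk 1).disj
  have hTBspec : ∀ a ∈ T1.carrier, ∀ a' ∈ T1.carrier,
      applyMoves T1'.s (NL 2) T1'.b a a' = flips sOf D12 T1.b a a' := by
    intro a ha a' ha'
    rw [hT1s, hs1, hfe 2]
    have step : flips sOf (DofL (NL 2)) T1'.b a a' =
        flips sOf (DofL (NL 2)) (flips sOf (DofL (NL 1)) T1.b) a a' := by
      apply flips_congr sOf _ _ _ T1.carrier ?_ ?_ a a' ha ha'
      · intro u v hv
        obtain ⟨⟨k', _, _, hsk⟩, _⟩ := hDT1 2 u v hv
        rw [hsk]; exact memG_carrier (T1.s_mem k')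
      · intro u hu v hv
        rw [hT1b]; exact hb1flips u hu v hv
    rw [step, flips_comp (hDOk 1) (hDOk 2) (hcross 1 2 (by omega)), hD12def]
  obtain ⟨TB, hTBG, hTBI, hTBs, hTBb⟩ := WBM_mk T1 sOf D12
    (fun g x hx => by
      rcases Finset.mem_union.1 hx with h | h
      · exact hDT1 1 g x h
      · exact hDT1 2 g x h)
    (applyMoves T1'.s (NL 2) T1'.b) hTBspec
  have hTBval : ∀ a ∈ T1.carrier, ∀ a' ∈ T1.carrier,
      TB.b a a' = flips sOf D12 T1.b a a' :=
    fun a ha a' ha' => by rw [hTBb]; exact hTBspec a ha a' ha'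
  -- F1 : removed rows are finished after phase 2
  have hF1 : ∀ r ∈ RR, ∀ a ∈ T1.carrier, TB.b r a = Tm.b r a := by
    intro r hr a ha
    have hrΩ : r ∈ T1.carrier := (Finset.mem_sdiff.1 hr).1
    rw [hTBval r hrΩ a ha, ← hmaster r hrΩ a ha]
    apply flips_eq_of_same
    · constructor
      · intro h; exact Finset.mem_union_left _ h
      · intro h
        rcases Finset.mem_union.1 h with h | h
        · exact h
        · exact absurd h (fun hh => (hD3new r a hh).1 hr)
    · constructor
      · intro h; exact Finset.mem_union_left _ h
      · intro h
        rcases Finset.mem_union.1 h with h | h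
        · exact h
        · exact absurd h (fun hh => (hD3new a r hh).2 hr)
  -- untouched s-rows
  have hsD12 : ∀ (k : Fin n) (y : α), y ∉ D12 (T.s k) ∧ (T.s k) ∉ D12 y := by
    intro k y
    constructor
    · intro h
      rcases Finset.mem_union.1 h with h | h
      · rw [← hskeq k] at h; exact hDs0 1 k y h
      · rw [← hskeq k] at h; exact hDs0 2 k y h
    · intro h
      have : (T.s k) ∈ T1.I := by
        rcases Finset.mem_union.1 h with h | h
        · exact (hDT1 1 y _ h).2
        · exact (hDT1 2 y _ h).2
      rw [← hskeq k] at this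
      exact hsnotI k this
  have hsD123 : ∀ (k : Fin n) (y : α), y ∉ D123 (T.s k) ∧ (T.s k) ∉ D123 y := by
    intro k y
    constructor
    · intro h
      rcases Finset.mem_union.1 h with h | h
      · exact (hsD12 k y).1 h
      · rw [← hskeq k] at h; exact hDs0 3 k y h
    · intro h
      rcases Finset.mem_union.1 h with h | h
      · exact (hsD12 k y).2 h
      · have : (T.s k) ∈ T1.I := (hDT1 3 y _ h).2
        rw [← hskeq k] at this
        exact hsnotI k this
  have hF2 : ∀ (k : Fin n), ∀ a ∈ T1.carrier, TB.b (T.s k) a = Tm.b (T.s k) a := by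
    intro k a ha
    rw [hTBval _ (hsΩ k) a ha, ← hmaster _ (hsΩ k) a ha]
    apply flips_eq_of_same
    · exact iff_of_false (hsD12 k a).1 (hsD123 k a).1
    · exact iff_of_false (hsD12 k a).2 (hsD123 k a).2
  -- TC
  obtain ⟨TC, hTCG, hTCI, hTCs, hTCb⟩ := WBM_sub TB T2.G T2.I T2.s
    (by rw [hTBs, hs1]; exact hs2) (fun k => by rw [hTBG]; exact hGsub2 k)
    (by rw [hTBI]; exact hIsub2) T2.s_mem T2.disjointG T2.disjointI
  have hTCval : ∀ a ∈ T1.carrier, ∀ a' ∈ T1.carrier,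
      TC.b a a' = flips sOf D12 T1.b a a' :=
    fun a ha a' ha' => by rw [hTCb]; exact hTBval a ha a' ha'
  -- N3 conclusions
  have hN3val : ∀ m ∈ NL 3, m.valid TC := by
    intro m hm
    obtain ⟨g, p, hp, hph, rfl⟩ := (hNLmem 3 m).1 hm
    have hnR := hphase3 g.1 p hph
    push_neg at hnR
    obtain ⟨h1, h2, h3, _⟩ := hcompP g p hp
    have hgT2 : g.1 ∈ T2.carrier := hnotRR _ (hGEcar _ g.2) hnR.1
    have hx1 : p.1 ∈ T2.carrier := hnotRR _ (memI_carrier (hVI g _ h1)) hnR.2.1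
    have hx2 : p.2 ∈ T2.carrier := hnotRR _ (memI_carrier (hVI g _ h2)) hnR.2.2
    refine ⟨by rw [hTCG]; exact hGET2 g hgT2, ?_,
      by rw [hTCI]; exact hIT2 _ (hVI g _ h1) hx1,
      by rw [hTCI]; exact hIT2 _ (hVI g _ h2) hx2, h3⟩
    rw [hTCs, hs2]
    exact fun h => hgs g _ (h.trans (hskeq _).symm)
  have hN3app : movesApplicable TC.s (NL 3) TC.b := by
    rw [hTCs, hs2]
    apply movesApplicable_of_LOk (NL 3) (hLOk 3) TC.b T1.b ?_ ?_
    · intro m hm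
      obtain ⟨g, p, hp, hph, rfl⟩ := (hNLmem 3 m).1 hm
      obtain ⟨h1, h2, _, _⟩ := hcompP g p hp
      have hmem := hDmem 3 g p hp hph
      have hgΩ := hGEcar g.1 g.2
      have e1 : TC.b g.1 p.1 = T1.b g.1 p.1 := by
        rw [hTCval g.1 hgΩ p.1 (memI_carrier (hVI g _ h1)), flips_of_not]
        · intro h
          rcases Finset.mem_union.1 h with h | h
          · exact hcross 3 1 (by omega) _ _ hmem.1 h
          · exact hcross 3 2 (by omega) _ _ hmem.1 h
        · intro h
          rcases Finset.mem_union.1 h with h | h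
          · exact hDI0 1 _ (hVI g _ h1) _ h
          · exact hDI0 2 _ (hVI g _ h1) _ h
      have e2 : TC.b g.1 p.2 = T1.b g.1 p.2 := by
        rw [hTCval g.1 hgΩ p.2 (memI_carrier (hVI g _ h2)), flips_of_not]
        · intro h
          rcases Finset.mem_union.1 h with h | h
          · exact hcross 3 1 (by omega) _ _ hmem.2 h
          · exact hcross 3 2 (by omega) _ _ hmem.2 h
        · intro h
          rcases Finset.mem_union.1 h with h | h
          · exact hDI0 1 _ (hVI g _ h2) _ h
          · exact hDI0 2 _ (hVI g _ h2) _ h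
      have es1 : TC.b (T.s (jOf g)) p.1 = T1.b (T.s (jOf g)) p.1 := by
        rw [hTCval _ (hsΩ _) _ (memI_carrier (hVI g _ h1)),
          flips_of_not (hsD12 _ _).1 (hsD12 _ _).2]
      have es2 : TC.b (T.s (jOf g)) p.2 = T1.b (T.s (jOf g)) p.2 := by
        rw [hTCval _ (hsΩ _) _ (memI_carrier (hVI g _ h2)),
          flips_of_not (hsD12 _ _).1 (hsD12 _ _).2]
      exact ⟨e1, e2, es1, es2⟩
    · intro m hm
      obtain ⟨g, p, hp, _, rfl⟩ := (hNLmem 3 m).1 hm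
      exact hbaseapp g p hp
  have hN3final : ∀ a ∈ T2.carrier, ∀ a' ∈ T2.carrier,
      applyMoves TC.s (NL 3) TC.b a a' = T2.b a a' := by
    intro a ha a' ha'
    have haΩ := hsub2c ha
    have ha'Ω := hsub2c ha'
    rw [hTCs, hs2, hfe 3]
    have step : flips sOf (DofL (NL 3)) TC.b a a' =
        flips sOf (DofL (NL 3)) (flips sOf D12 T1.b) a a' := by
      apply flips_congr sOf _ _ _ T1.carrier ?_ hTCval a a' haΩ ha'Ω
      intro u v hv
      obtain ⟨⟨k', _, _, hsk⟩, _⟩ := hDT1 3 u v hv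
      rw [hsk]; exact memG_carrier (T1.s_mem k')
    have hdisj123 : ∀ g x, x ∈ D12 g → x ∉ DofL (NL 3) g := by
      intro g x hx h3
      rcases Finset.mem_union.1 hx with h | h
      · exact hcross 1 3 (by omega) _ _ h h3
      · exact hcross 2 3 (by omega) _ _ h h3
    rw [step, flips_comp hDOk12 (hDOk 3) hdisj123, ← hD123def,
      hmaster a haΩ a' ha'Ω]
    exact hag2 a ha a' ha'
  -- reducedness of N2
  have hndGL : Glist.Pairwise (· ≠ ·) := by rw [hGLdef]; exact Finset.nodup_toList _
  have hRed : ReducedMoves (NL 2) := by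
    refine ⟨Glist.map (blk 2), ?_, ?_, ?_, ?_⟩
    · simp only [hNLdef]
      exact flatMap_eq_flatten_map Glist (blk 2)
    · intro B hB m hm m' hm'
      rcases List.mem_map.1 hB with ⟨g, _, rfl⟩
      rw [hblkg 2 g m hm, hblkg 2 g m' hm']
    · refine List.pairwise_map.2 (List.Pairwise.imp ?_ hndGL)
      intro g g' hne m hm m' hm'
      rw [hblkg 2 g m hm, hblkg 2 g' m' hm']
      exact fun h => hne (Subtype.ext h)
    · intro B hB x
      rcases List.mem_map.1 hB with ⟨g, _, rfl⟩
      apply countP_pairs_le_one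
      simp only [hblkdef]
      refine List.pairwise_map.2 ?_
      refine List.Pairwise.imp ?_
        (List.Pairwise.sublist (List.filter_sublist) (hPg g).2.1)
      intro p q hpq
      exact hpq
  -- touching
  have htouch : ∀ m ∈ NL 2, (m.g ∈ AA ∨ m.x1 ∈ AA ∨ m.x2 ∈ AA) ∧
      (m.g ∈ RR ∨ m.x1 ∈ RR ∨ m.x2 ∈ RR) := by
    intro m hm
    obtain ⟨g, p, hp, hph, rfl⟩ := (hNLmem 2 m).1 hm
    exact hphase2 g.1 p hph
  have hmemN2 : ∀ m ∈ NL 2, m.g ∈ Finset.univ.biUnion T1.G ∧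
      m.x1 ∈ T1.I ∧ m.x2 ∈ T1.I := by
    intro m hm
    obtain ⟨h1, h2, h3, _⟩ := (hLOk 2).types m hm
    exact ⟨(Finset.mem_filter.1 h1).1, h2, h3⟩
  -- counting
  have hcount : ∀ (a : α) (W : Finset α),
      (∀ m ∈ NL 2, m.g = a → (m.x1 ∈ W ∨ m.x2 ∈ W)) →
      ((NL 2).countP fun m => decide (m.g = a)) ≤ W.card := by
    intro a W hW
    have e : ((NL 2).countP fun m => decide (m.g = a)) =
        (Glist.map fun g => ((blk 2 g).countP fun m => decide (m.g = a))).sum := by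
      simp only [hNLdef]
      exact countP_flatMap Glist (blk 2) _
    rw [e]
    apply sum_le_single
    · intro g _
      by_cases hga : g.1 = a
      · calc ((blk 2 g).countP fun m => decide (m.g = a)) ≤ (blk 2 g).length :=
            List.countP_le_length
          _ = ((Pg g).filter (fun p => phase g.1 p = 2)).length := by
            simp only [hblkdef, List.length_map]
          _ ≤ W.card := by
            apply pairs_length_le
            · exact List.Pairwise.sublist (List.filter_sublist) (hPg g).2.1
            · intro p hp
              have hph : phase g.1 p = 2 := by
                have := (List.mem_filter.1 hp).2
                simpa using this
              have hpN : toMove g p ∈ NL 2 :=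
                (hNLmem 2 _).2 ⟨g, p, (List.mem_filter.1 hp).1, hph, rfl⟩
              exact hW (toMove g p) hpN hga
      · have hz : ((blk 2 g).countP fun m => decide (m.g = a)) = 0 := by
          apply List.countP_eq_zero.2
          intro m hm
          simp only [decide_eq_true_eq]
          rw [hblkg 2 g m hm]
          exact hga
        rw [hz]
        exact Nat.zero_le _
    · apply List.Pairwise.imp ?_ hndGL
      intro g g' hne
      by_cases hga : g.1 = a
      · right
        apply List.countP_eq_zero.2
        intro m hm
        simp only [decide_eq_true_eq]
        rw [hblkg 2 g' m hm]
        exact fun h => hne (Subtype.ext (hga.trans h.symm))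
      · left
        apply List.countP_eq_zero.2
        intro m hm
        simp only [decide_eq_true_eq]
        rw [hblkg 2 g m hm]
        exact hga
  exact ⟨NL 1, NL 2, NL 3, TA, T1', TB, TC,
    hN1val, hN1app, ⟨hTAG, hTAI, hTAs⟩, (fun a _ a' _ => by rw [hTAb]),
    ⟨hT1G, hT1I, hT1s⟩, hN2val, hN2app, ⟨hTBG, hTBI, hTBs⟩,
    (fun a _ a' _ => by rw [hTBb]), ⟨hTCG, hTCI, hTCs, hTCb⟩,
    hN3val, hN3app, hN3final, hRed, htouch, hmemN2, hcount, hE1, hE2, hE3, hF1, hF2⟩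




lemma ext_facts {T T' : WovenBasedMatrix α H n} {i : ℕ} (h : ExtRelAt i T T') :
    T'.s = T.s ∧ (∀ k, T.G k ⊆ T'.G k) ∧ T.I ⊆ T'.I ∧
    (∀ a ∈ T.carrier, ∀ a' ∈ T.carrier, T'.b a a' = T.b a a') ∧
    (∃ W : Finset α, W.card ≤ 2 ∧ ∀ a ∈ T'.carrier, a ∈ T.carrier ∨ a ∈ W) ∧
    (i ≠ 4 → T'.I = T.I) ∧ (i = 4 → ∀ k, T'.G k = T.G k) := by
  match i, h with
  | 0, h => exact h.elim
  | 1, h =>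
    obtain ⟨j, g, hg, hs, hI, hGj, hGo, hag, _⟩ := h
    refine ⟨hs, ?_, by rw [hI], hag, ⟨{g}, by simp, ?_⟩, fun _ => hI,
      fun h4 => absurd h4 (by omega)⟩
    · intro k
      by_cases hk : k = j
      · subst hk; rw [hGj]; exact Finset.subset_insert _ _
      · rw [hGo k hk]
    · intro a ha
      rcases Finset.mem_union.1 ha with hh | hh
      · rcases Finset.mem_biUnion.1 hh with ⟨k, _, hk⟩
        by_cases hkj : k = j
        · subst hkj; rw [hGj] at hk
          rcases Finset.mem_insert.1 hk with hk | hk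
          · exact Or.inr (by simp [hk])
          · exact Or.inl (memG_carrier hk)
        · rw [hGo k hkj] at hk
          exact Or.inl (memG_carrier hk)
      · rw [hI] at hh
        exact Or.inl (memI_carrier hh)
  | 2, h =>
    obtain ⟨j, g, hg, hs, hI, hGj, hGo, hag, _⟩ := h
    refine ⟨hs, ?_, by rw [hI], hag, ⟨{g}, by simp, ?_⟩, fun _ => hI,
      fun h4 => absurd h4 (by omega)⟩
    · intro k
      by_cases hk : k = j
      · subst hk; rw [hGj]; exact Finset.subset_insert _ _
      · rw [hGo k hk]
    · intro a ha
      rcases Finset.mem_union.1 ha with hh | hh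
      · rcases Finset.mem_biUnion.1 hh with ⟨k, _, hk⟩
        by_cases hkj : k = j
        · subst hkj; rw [hGj] at hk
          rcases Finset.mem_insert.1 hk with hk | hk
          · exact Or.inr (by simp [hk])
          · exact Or.inl (memG_carrier hk)
        · rw [hGo k hkj] at hk
          exact Or.inl (memG_carrier hk)
      · rw [hI] at hh
        exact Or.inl (memI_carrier hh)
  | 3, h =>
    obtain ⟨j, g1, g2, hne, hg1, hg2, hs, hI, hGj, hGo, hag, _⟩ := h
    refine ⟨hs, ?_, by rw [hI], hag, ⟨{g1, g2}, ?_, ?_⟩, fun _ => hI,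
      fun h4 => absurd h4 (by omega)⟩
    · intro k
      by_cases hk : k = j
      · subst hk; rw [hGj]
        exact (Finset.subset_insert _ _).trans (Finset.subset_insert _ _)
      · rw [hGo k hk]
    · exact le_trans (Finset.card_insert_le _ _) (by simp)
    · intro a ha
      rcases Finset.mem_union.1 ha with hh | hh
      · rcases Finset.mem_biUnion.1 hh with ⟨k, _, hk⟩
        by_cases hkj : k = j
        · subst hkj; rw [hGj] at hk
          rcases Finset.mem_insert.1 hk with hk | hk
          · exact Or.inr (by simp [hk])
          · rcases Finset.mem_insert.1 hk with hk | hk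
            · exact Or.inr (by simp [hk])
            · exact Or.inl (memG_carrier hk)
        · rw [hGo k hkj] at hk
          exact Or.inl (memG_carrier hk)
      · rw [hI] at hh
        exact Or.inl (memI_carrier hh)
  | 4, h =>
    obtain ⟨x1, x2, hne, hx1, hx2, hs, hG, hI, hag, _⟩ := h
    refine ⟨hs, fun k => by rw [hG], ?_, hag, ⟨{x1, x2}, ?_, ?_⟩,
      fun h4 => absurd rfl h4, fun _ k => congrFun hG k⟩
    · rw [hI]
      exact (Finset.subset_insert _ _).trans (Finset.subset_insert _ _)
    · exact le_trans (Finset.card_insert_le _ _) (by simp)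
    · intro a ha
      rcases Finset.mem_union.1 ha with hh | hh
      · rcases Finset.mem_biUnion.1 hh with ⟨k, _, hk⟩
        rw [hG] at hk
        exact Or.inl (memG_carrier hk)
      · rw [hI] at hh
        rcases Finset.mem_insert.1 hh with hh | hh
        · exact Or.inr (by simp [hh])
        · rcases Finset.mem_insert.1 hh with hh | hh
          · exact Or.inr (by simp [hh])
          · exact Or.inl (memI_carrier hh)
  | (k+5), h => exact h.elim

end MBEI

/-- a composition `M_j⁻¹ ∘ N ∘ M_i`, with `N` a finite sequence of
intersection moves, can be replaced by `N₃ ∘ M_j⁻¹ ∘ N₂ ∘ M_i ∘ N₁` with the same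
result, where `N₂` is reduced and every intersection move of `N₂` affects both an
element added by `M_i` and an element removed by `M_j⁻¹`; moreover if exactly one of
`i, j` equals `4`, then `N₂` has at most `2` moves acting on each non-intersection
element added (resp. removed), and if `i = j = 4` then `N₂` has at most two moves
acting on each element `g` of `G`. -/
theorem moves_between_extension_and_inverse
    {α : Type u} {H : Type v} [DecidableEq α] [AddCommGroup H] {n : ℕ}
    (T T1 Tm T2 : WovenBasedMatrix α H n) (i j : ℕ)
    (hi : ExtRelAt i T T1)
    (N : List (MoveDatum α n))
    (hNval : ∀ m ∈ N, m.valid T1) (hNapp : movesApplicable T1.s N T1.b)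
    (hTmG : Tm.G = T1.G) (hTmI : Tm.I = T1.I) (hTms : Tm.s = T1.s)
    (hTmb : ∀ a ∈ T1.carrier, ∀ a' ∈ T1.carrier,
      Tm.b a a' = applyMoves T1.s N T1.b a a')
    (hj : ExtRelAt j T2 Tm) :
    ∃ (N1 N2 N3 : List (MoveDatum α n)) (TA T1' TB TC : WovenBasedMatrix α H n),
      (∀ m ∈ N1, m.valid T) ∧ movesApplicable T.s N1 T.b ∧
      TA.G = T.G ∧ TA.I = T.I ∧ TA.s = T.s ∧
      (∀ a ∈ T.carrier, ∀ a' ∈ T.carrier, TA.b a a' = applyMoves T.s N1 T.b a a') ∧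
      ExtRelAt i TA T1' ∧
      (∀ m ∈ N2, m.valid T1') ∧ movesApplicable T1'.s N2 T1'.b ∧
      TB.G = T1'.G ∧ TB.I = T1'.I ∧ TB.s = T1'.s ∧
      (∀ a ∈ T1'.carrier, ∀ a' ∈ T1'.carrier,
        TB.b a a' = applyMoves T1'.s N2 T1'.b a a') ∧
      ExtRelAt j TC TB ∧
      (∀ m ∈ N3, m.valid TC) ∧ movesApplicable TC.s N3 TC.b ∧
      TC.G = T2.G ∧ TC.I = T2.I ∧ TC.s = T2.s ∧
      (∀ a ∈ T2.carrier, ∀ a' ∈ T2.carrier,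
        applyMoves TC.s N3 TC.b a a' = T2.b a a') ∧
      ReducedMoves N2 ∧
      (∀ m ∈ N2,
        (m.g ∈ T1'.carrier \ TA.carrier ∨ m.x1 ∈ T1'.carrier \ TA.carrier ∨
          m.x2 ∈ T1'.carrier \ TA.carrier) ∧
        (m.g ∈ TB.carrier \ TC.carrier ∨ m.x1 ∈ TB.carrier \ TC.carrier ∨
          m.x2 ∈ TB.carrier \ TC.carrier)) ∧
      (i ≠ 4 → j = 4 → ∀ a ∈ T1'.carrier \ TA.carrier,
        (N2.countP fun m => decide (m.g = a)) ≤ 2) ∧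
      (i = 4 → j ≠ 4 → ∀ a ∈ TB.carrier \ TC.carrier,
        (N2.countP fun m => decide (m.g = a)) ≤ 2) ∧
      (i = 4 → j = 4 → ∀ a : α, (N2.countP fun m => decide (m.g = a)) ≤ 2) := by
  classical
  obtain ⟨hs1, hGsub1, hIsub1, hag1, ⟨W1, hW1c, hW1cov⟩, hI41, hG41⟩ := MBEI.ext_facts hi
  obtain ⟨hs2', hGsub2', hIsub2', hag2, ⟨W2, hW2c, hW2cov⟩, hI42, hG42⟩ := MBEI.ext_facts hj
  have hs2 : T2.s = T.s := by rw [← hs2', hTms, hs1]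
  have hGsub2 : ∀ k, T2.G k ⊆ T1.G k := fun k => by rw [← hTmG]; exact hGsub2' k
  have hIsub2 : T2.I ⊆ T1.I := by rw [← hTmI]; exact hIsub2'
  obtain ⟨N1, N2, N3, TA, T1', TB, TC, c1, c2, ⟨c3G, c3I, c3s⟩, c4, ⟨c5G, c5I, c5s⟩,
    c6, c7, ⟨c8G, c8I, c8s⟩, c9, ⟨c10G, c10I, c10s, c10b⟩, c11, c12, c13, c14, c15, c16,
    c17, cE1, cE2, cE3, cF1, cF2⟩ :=
    MBEI.core T T1 Tm T2 N hNval hNapp hTmG hTmI hTmb hs1 hag1 hGsub1 hIsub1 hs2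
      hag2 hGsub2 hIsub2
  have hcarA : TA.carrier = T.carrier := by
    unfold WovenBasedMatrix.carrier; rw [c3G, c3I]
  have hcar1 : T1'.carrier = T1.carrier := by
    unfold WovenBasedMatrix.carrier; rw [c5G, c5I]
  have hcarB : TB.carrier = T1.carrier := by
    unfold WovenBasedMatrix.carrier; rw [c8G, c8I]
  have hcarC : TC.carrier = T2.carrier := by
    unfold WovenBasedMatrix.carrier; rw [c10G, c10I]
  have hcarM : Tm.carrier = T1.carrier := by
    unfold WovenBasedMatrix.carrier; rw [hTmG, hTmI]
  have hsTA : T1'.s = TA.s := by rw [c5s, hs1, c3s]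
  have hs1Ω : ∀ k, T1.s k ∈ T1.carrier := fun k => MBEI.memG_carrier (T1.s_mem k)
  have hs1T : ∀ k, T1.s k ∈ T.carrier := fun k => by
    rw [congrFun hs1 k]; exact MBEI.memG_carrier (T.s_mem k)
  have hRHSrow : ∀ (jj : Fin n), ∀ a ∈ T1.carrier,
      T1'.b (T1'.s jj) a = T1.b (T1.s jj) a := by
    intro jj a ha
    rw [congrFun c5s jj]
    by_cases hA : a ∈ T1.carrier \ T.carrier
    · exact cE1 _ (hs1Ω jj) a ha (Or.inr hA)
    · have haT : a ∈ T.carrier := by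
        by_contra hc; exact hA (Finset.mem_sdiff.2 ⟨ha, hc⟩)
      rw [cE2 _ (hs1T jj) a haT, congrFun hs1 jj, cE3 jj a ha]
      exact (hag1 _ (MBEI.memG_carrier (T.s_mem jj)) a haT).symm
  have hExtI : ExtRelAt i TA T1' :=
    match i, hi with
    | 0, hi => hi.elim
    | 1, hi => by
      obtain ⟨jj, g, hgnot, hsτ, hIτ, hGjτ, hGoτ, hagτ, hprop⟩ := hi
      have hgT1 : g ∈ T1.G jj := by rw [hGjτ]; exact Finset.mem_insert_self _ _
      have hgA : g ∈ T1.carrier \ T.carrier :=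
        Finset.mem_sdiff.2 ⟨MBEI.memG_carrier hgT1, hgnot⟩
      show ExtRel1 TA T1'
      refine ⟨jj, g, by rw [hcarA]; exact hgnot, hsTA, by rw [c5I, hIτ, c3I],
        by rw [c5G, hGjτ, c3G], fun k hk => by rw [c5G, hGoτ k hk, c3G],
        fun a ha a' ha' => cE2 a (by rw [← hcarA]; exact ha) a' (by rw [← hcarA]; exact ha'),
        ?_⟩
      intro a ha
      rw [hcar1] at ha
      rw [cE1 g (MBEI.memG_carrier hgT1) a ha (Or.inl hgA)]
      exact hprop a ha
    | 2, hi => by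
      obtain ⟨jj, g, hgnot, hsτ, hIτ, hGjτ, hGoτ, hagτ, hprop⟩ := hi
      have hgT1 : g ∈ T1.G jj := by rw [hGjτ]; exact Finset.mem_insert_self _ _
      have hgA : g ∈ T1.carrier \ T.carrier :=
        Finset.mem_sdiff.2 ⟨MBEI.memG_carrier hgT1, hgnot⟩
      show ExtRel2 TA T1'
      refine ⟨jj, g, by rw [hcarA]; exact hgnot, hsTA, by rw [c5I, hIτ, c3I],
        by rw [c5G, hGjτ, c3G], fun k hk => by rw [c5G, hGoτ k hk, c3G],
        fun a ha a' ha' => cE2 a (by rw [← hcarA]; exact ha) a' (by rw [← hcarA]; exact ha'),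
        ?_⟩
      intro a ha
      rw [hcar1] at ha
      rw [cE1 g (MBEI.memG_carrier hgT1) a ha (Or.inl hgA), hRHSrow jj a ha]
      exact hprop a ha
    | 3, hi => by
      obtain ⟨jj, g1, g2, hgne, hg1not, hg2not, hsτ, hIτ, hGjτ, hGoτ, hagτ, hprop⟩ := hi
      have hg1T1 : g1 ∈ T1.G jj := by rw [hGjτ]; exact Finset.mem_insert_self _ _
      have hg2T1 : g2 ∈ T1.G jj := by
        rw [hGjτ]; exact Finset.mem_insert_of_mem (Finset.mem_insert_self _ _)
      have hg1A : g1 ∈ T1.carrier \ T.carrier :=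
        Finset.mem_sdiff.2 ⟨MBEI.memG_carrier hg1T1, hg1not⟩
      have hg2A : g2 ∈ T1.carrier \ T.carrier :=
        Finset.mem_sdiff.2 ⟨MBEI.memG_carrier hg2T1, hg2not⟩
      show ExtRel3 TA T1'
      refine ⟨jj, g1, g2, hgne, by rw [hcarA]; exact hg1not, by rw [hcarA]; exact hg2not,
        hsTA, by rw [c5I, hIτ, c3I], by rw [c5G, hGjτ, c3G],
        fun k hk => by rw [c5G, hGoτ k hk, c3G],
        fun a ha a' ha' => cE2 a (by rw [← hcarA]; exact ha) a' (by rw [← hcarA]; exact ha'),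
        ?_⟩
      intro a ha
      rw [hcar1] at ha
      rw [cE1 g1 (MBEI.memG_carrier hg1T1) a ha (Or.inl hg1A),
        cE1 g2 (MBEI.memG_carrier hg2T1) a ha (Or.inl hg2A), hRHSrow jj a ha]
      exact hprop a ha
    | 4, hi => by
      obtain ⟨x1, x2, hxne, hx1not, hx2not, hsτ, hGτ, hIτ, hagτ, hprop⟩ := hi
      have hx1T1 : x1 ∈ T1.I := by rw [hIτ]; exact Finset.mem_insert_self _ _
      have hx2T1 : x2 ∈ T1.I := by
        rw [hIτ]; exact Finset.mem_insert_of_mem (Finset.mem_insert_self _ _)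
      have hx1A : x1 ∈ T1.carrier \ T.carrier :=
        Finset.mem_sdiff.2 ⟨MBEI.memI_carrier hx1T1, hx1not⟩
      have hx2A : x2 ∈ T1.carrier \ T.carrier :=
        Finset.mem_sdiff.2 ⟨MBEI.memI_carrier hx2T1, hx2not⟩
      show ExtRel4 TA T1'
      refine ⟨x1, x2, hxne, by rw [hcarA]; exact hx1not, by rw [hcarA]; exact hx2not,
        hsTA, by rw [c5G, hGτ, c3G], by rw [c5I, hIτ, c3I],
        fun a ha a' ha' => cE2 a (by rw [← hcarA]; exact ha) a' (by rw [← hcarA]; exact ha'),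
        ?_⟩
      intro a ha
      rw [hcar1] at ha
      rw [cE1 x1 (MBEI.memI_carrier hx1T1) a ha (Or.inl hx1A),
        cE1 x2 (MBEI.memI_carrier hx2T1) a ha (Or.inl hx2A)]
      exact hprop a ha
    | (k+5), hi => hi.elim
  have hExtJ : ExtRelAt j TC TB :=
    match j, hj with
    | 0, hj => hj.elim
    | 1, hj => by
      obtain ⟨jj, r, hrnot, hsm, hIm, hGjm, hGom, hagm, hprop⟩ := hj
      have hrT1 : r ∈ T1.G jj := by rw [← hTmG, hGjm]; exact Finset.mem_insert_self _ _
      have hrR : r ∈ T1.carrier \ T2.carrier :=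
        Finset.mem_sdiff.2 ⟨MBEI.memG_carrier hrT1, hrnot⟩
      show ExtRel1 TC TB
      refine ⟨jj, r, by rw [hcarC]; exact hrnot, by rw [c8s, hs1, c10s, hs2],
        by rw [c8I, ← hTmI, hIm, c10I], by rw [c8G, ← hTmG, hGjm, c10G],
        fun k hk => by rw [c8G, ← hTmG, hGom k hk, c10G],
        fun a _ a' _ => by rw [c10b], ?_⟩
      intro a ha
      rw [hcarB] at ha
      rw [cF1 r hrR a ha]
      exact hprop a (by rw [hcarM]; exact ha)
    | 2, hj => by
      obtain ⟨jj, r, hrnot, hsm, hIm, hGjm, hGom, hagm, hprop⟩ := hj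
      have hrT1 : r ∈ T1.G jj := by rw [← hTmG, hGjm]; exact Finset.mem_insert_self _ _
      have hrR : r ∈ T1.carrier \ T2.carrier :=
        Finset.mem_sdiff.2 ⟨MBEI.memG_carrier hrT1, hrnot⟩
      show ExtRel2 TC TB
      refine ⟨jj, r, by rw [hcarC]; exact hrnot, by rw [c8s, hs1, c10s, hs2],
        by rw [c8I, ← hTmI, hIm, c10I], by rw [c8G, ← hTmG, hGjm, c10G],
        fun k hk => by rw [c8G, ← hTmG, hGom k hk, c10G],
        fun a _ a' _ => by rw [c10b], ?_⟩
      intro a ha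
      rw [hcarB] at ha
      rw [cF1 r hrR a ha, congrFun c8s jj, congrFun hs1 jj, cF2 jj a ha]
      rw [show T.s jj = Tm.s jj by rw [hTms, hs1]]
      exact hprop a (by rw [hcarM]; exact ha)
    | 3, hj => by
      obtain ⟨jj, r1, r2, hrne, hr1not, hr2not, hsm, hIm, hGjm, hGom, hagm, hprop⟩ := hj
      have hr1T1 : r1 ∈ T1.G jj := by rw [← hTmG, hGjm]; exact Finset.mem_insert_self _ _
      have hr2T1 : r2 ∈ T1.G jj := by
        rw [← hTmG, hGjm]; exact Finset.mem_insert_of_mem (Finset.mem_insert_self _ _)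
      have hr1R : r1 ∈ T1.carrier \ T2.carrier :=
        Finset.mem_sdiff.2 ⟨MBEI.memG_carrier hr1T1, hr1not⟩
      have hr2R : r2 ∈ T1.carrier \ T2.carrier :=
        Finset.mem_sdiff.2 ⟨MBEI.memG_carrier hr2T1, hr2not⟩
      show ExtRel3 TC TB
      refine ⟨jj, r1, r2, hrne, by rw [hcarC]; exact hr1not, by rw [hcarC]; exact hr2not,
        by rw [c8s, hs1, c10s, hs2], by rw [c8I, ← hTmI, hIm, c10I],
        by rw [c8G, ← hTmG, hGjm, c10G],
        fun k hk => by rw [c8G, ← hTmG, hGom k hk, c10G],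
        fun a _ a' _ => by rw [c10b], ?_⟩
      intro a ha
      rw [hcarB] at ha
      rw [cF1 r1 hr1R a ha, cF1 r2 hr2R a ha, congrFun c8s jj, congrFun hs1 jj,
        cF2 jj a ha]
      rw [show T.s jj = Tm.s jj by rw [hTms, hs1]]
      exact hprop a (by rw [hcarM]; exact ha)
    | 4, hj => by
      obtain ⟨x1, x2, hxne, hx1not, hx2not, hsm, hGm, hIm, hagm, hprop⟩ := hj
      have hx1T1 : x1 ∈ T1.I := by rw [← hTmI, hIm]; exact Finset.mem_insert_self _ _
      have hx2T1 : x2 ∈ T1.I := by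
        rw [← hTmI, hIm]; exact Finset.mem_insert_of_mem (Finset.mem_insert_self _ _)
      have hx1R : x1 ∈ T1.carrier \ T2.carrier :=
        Finset.mem_sdiff.2 ⟨MBEI.memI_carrier hx1T1, hx1not⟩
      have hx2R : x2 ∈ T1.carrier \ T2.carrier :=
        Finset.mem_sdiff.2 ⟨MBEI.memI_carrier hx2T1, hx2not⟩
      show ExtRel4 TC TB
      refine ⟨x1, x2, hxne, by rw [hcarC]; exact hx1not, by rw [hcarC]; exact hx2not,
        by rw [c8s, hs1, c10s, hs2], by rw [c8G, ← hTmG, hGm, c10G],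
        by rw [c8I, ← hTmI, hIm, c10I],
        fun a _ a' _ => by rw [c10b], ?_⟩
      intro a ha
      rw [hcarB] at ha
      rw [cF1 x1 hx1R a ha, cF1 x2 hx2R a ha]
      exact hprop a (by rw [hcarM]; exact ha)
    | (k+5), hj => hj.elim
  refine ⟨N1, N2, N3, TA, T1', TB, TC, c1, c2, c3G, c3I, c3s, c4, hExtI, c6, c7,
    by rw [c8G, c5G], by rw [c8I, c5I], by rw [c8s, c5s], c9, hExtJ, c11, c12,
    c10G, c10I, c10s, c13, c14, ?_, ?_, ?_, ?_⟩
  · intro m hm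
    have := c15 m hm
    simp only [hcar1, hcarA, hcarB, hcarC]
    exact this
  · -- i ≠ 4, j = 4
    intro hi4 hj4 a _
    refine le_trans (c17 a W2 ?_) hW2c
    intro m hm hma
    obtain ⟨t1, t2⟩ := c15 m hm
    obtain ⟨hmg, hmx1, hmx2⟩ := c16 m hm
    have hgnotI : m.g ∉ T1.I := by
      intro h
      rcases Finset.mem_biUnion.1 hmg with ⟨k, _, hk⟩
      exact (Finset.disjoint_left.1 (T1.disjointI k) hk) h
    have hRRsub : ∀ r ∈ T1.carrier \ T2.carrier, r ∈ W2 ∧ r ∈ T1.I := by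
      intro r hr
      obtain ⟨hrΩ, hrn⟩ := Finset.mem_sdiff.1 hr
      constructor
      · rcases hW2cov r (by rw [hcarM]; exact hrΩ) with hc | hc
        · exact absurd hc hrn
        · exact hc
      · rcases Finset.mem_union.1 hrΩ with h | h
        · rcases Finset.mem_biUnion.1 h with ⟨k, _, hk⟩
          have : r ∈ T2.G k := by rw [← hG42 hj4 k, hTmG]; exact hk
          exact absurd (MBEI.memG_carrier this) hrn
        · exact h
    rcases t2 with h | h | h
    · exact absurd (hRRsub _ h).2 hgnotI
    · exact Or.inl (hRRsub _ h).1
    · exact Or.inr (hRRsub _ h).1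
  · -- i = 4, j ≠ 4
    intro hi4 hj4 a _
    refine le_trans (c17 a W1 ?_) hW1c
    intro m hm hma
    obtain ⟨t1, t2⟩ := c15 m hm
    obtain ⟨hmg, hmx1, hmx2⟩ := c16 m hm
    have hgnotI : m.g ∉ T1.I := by
      intro h
      rcases Finset.mem_biUnion.1 hmg with ⟨k, _, hk⟩
      exact (Finset.disjoint_left.1 (T1.disjointI k) hk) h
    have hAAsub : ∀ r ∈ T1.carrier \ T.carrier, r ∈ W1 ∧ r ∈ T1.I := by
      intro r hr
      obtain ⟨hrΩ, hrn⟩ := Finset.mem_sdiff.1 hr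
      constructor
      · rcases hW1cov r hrΩ with hc | hc
        · exact absurd hc hrn
        · exact hc
      · rcases Finset.mem_union.1 hrΩ with h | h
        · rcases Finset.mem_biUnion.1 h with ⟨k, _, hk⟩
          have : r ∈ T.G k := by rw [← hG41 hi4 k]; exact hk
          exact absurd (MBEI.memG_carrier this) hrn
        · exact h
    rcases t1 with h | h | h
    · exact absurd (hAAsub _ h).2 hgnotI
    · exact Or.inl (hAAsub _ h).1
    · exact Or.inr (hAAsub _ h).1
  · -- i = 4, j = 4
    intro hi4 hj4 a
    refine le_trans (c17 a W1 ?_) hW1c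
    intro m hm hma
    obtain ⟨t1, t2⟩ := c15 m hm
    obtain ⟨hmg, hmx1, hmx2⟩ := c16 m hm
    have hgnotI : m.g ∉ T1.I := by
      intro h
      rcases Finset.mem_biUnion.1 hmg with ⟨k, _, hk⟩
      exact (Finset.disjoint_left.1 (T1.disjointI k) hk) h
    have hAAsub : ∀ r ∈ T1.carrier \ T.carrier, r ∈ W1 ∧ r ∈ T1.I := by
      intro r hr
      obtain ⟨hrΩ, hrn⟩ := Finset.mem_sdiff.1 hr
      constructor
      · rcases hW1cov r hrΩ with hc | hc
        · exact absurd hc hrn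
        · exact hc
      · rcases Finset.mem_union.1 hrΩ with h | h
        · rcases Finset.mem_biUnion.1 h with ⟨k, _, hk⟩
          have : r ∈ T.G k := by rw [← hG41 hi4 k]; exact hk
          exact absurd (MBEI.memG_carrier this) hrn
        · exact h
    rcases t1 with h | h | h
    · exact absurd (hAAsub _ h).2 hgnotI
    · exact Or.inl (hAAsub _ h).1
    · exact Or.inr (hAAsub _ h).1
end

section
/- Every woven based matrix T over an abelian group H is homologous to a primitive woven based matrix T_•. -/
universe u v

variable {α : Type u} {H : Type v} [DecidableEq α] [AddCommGroup H] {n : ℕ}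

section Aux

lemma updateG_subset (T : WovenBasedMatrix α H n) (i : Fin n) (S : Finset α) :
    ∀ j, Function.update T.G i (T.G i \ S) j ⊆ T.G j := by
  intro j
  rcases eq_or_ne j i with rfl | h
  · rw [Function.update_self]; exact Finset.sdiff_subset
  · rw [Function.update_of_ne h]

lemma updateG_carrier_mem {T : WovenBasedMatrix α H n} {i : Fin n} {S : Finset α} {a : α}
    (ha : a ∈ Finset.univ.biUnion (Function.update T.G i (T.G i \ S)) ∪ T.I) :
    a ∈ Finset.univ.biUnion T.G ∪ T.I := by
  simp only [Finset.mem_union, Finset.mem_biUnion] at ha ⊢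
  rcases ha with ⟨j, _, hj⟩ | h
  · exact Or.inl ⟨j, Finset.mem_univ j, updateG_subset T i S j hj⟩
  · exact Or.inr h

/-- Remove a subset `S` (not containing `s i`) from the part `G i`. -/
def WovenBasedMatrix.restrictG (T : WovenBasedMatrix α H n) (i : Fin n) (S : Finset α)
    (hs : T.s i ∉ S) : WovenBasedMatrix α H n where
  G := Function.update T.G i (T.G i \ S)
  I := T.I
  s := T.s
  b := T.b
  s_mem := by
    intro j
    rcases eq_or_ne j i with rfl | h
    · rw [Function.update_self]; exact Finset.mem_sdiff.2 ⟨T.s_mem j, hs⟩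
    · rw [Function.update_of_ne h]; exact T.s_mem j
  disjointG := fun j k hjk =>
    (T.disjointG j k hjk).mono (updateG_subset T i S j) (updateG_subset T i S k)
  disjointI := fun j => (T.disjointI j).mono_left (updateG_subset T i S j)
  skew := fun a ha a' ha' => T.skew a (updateG_carrier_mem ha) a' (updateG_carrier_mem ha')
  diag := fun a ha => T.diag a (updateG_carrier_mem ha)
  inter_zero := T.inter_zero
  weave_two := T.weave_two
  weave_val := fun j g hg x hx => T.weave_val j g (updateG_subset T i S j hg) x hx

lemma restrictI_carrier_mem {T : WovenBasedMatrix α H n} {S : Finset α} {a : α}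
    (ha : a ∈ Finset.univ.biUnion T.G ∪ (T.I \ S)) :
    a ∈ Finset.univ.biUnion T.G ∪ T.I := by
  simp only [Finset.mem_union, Finset.mem_sdiff] at ha ⊢
  tauto

/-- Remove a subset `S` from the weaving set `I`. -/
def WovenBasedMatrix.restrictI (T : WovenBasedMatrix α H n) (S : Finset α) :
    WovenBasedMatrix α H n where
  G := T.G
  I := T.I \ S
  s := T.s
  b := T.b
  s_mem := T.s_mem
  disjointG := T.disjointG
  disjointI := fun j => (T.disjointI j).mono_right Finset.sdiff_subset
  skew := fun a ha a' ha' => T.skew a (restrictI_carrier_mem ha) a' (restrictI_carrier_mem ha')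
  diag := fun a ha => T.diag a (restrictI_carrier_mem ha)
  inter_zero := fun x hx y hy =>
    T.inter_zero x (Finset.sdiff_subset hx) y (Finset.sdiff_subset hy)
  weave_two := fun x hx => T.weave_two x (Finset.sdiff_subset hx)
  weave_val := fun j g hg x hx => T.weave_val j g hg x (Finset.sdiff_subset hx)

lemma restrictG_carrier_subset (T : WovenBasedMatrix α H n) (i : Fin n) (S : Finset α)
    (hs : T.s i ∉ S) : (T.restrictG i S hs).carrier ⊆ T.carrier :=
  fun _ ha => updateG_carrier_mem ha

lemma restrictG_not_mem (T : WovenBasedMatrix α H n) (i : Fin n) (S : Finset α)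
    (hs : T.s i ∉ S) {g : α} (hgS : g ∈ S) (hgG : g ∈ T.G i) :
    g ∉ (T.restrictG i S hs).carrier := by
  intro hmem
  simp only [WovenBasedMatrix.restrictG, WovenBasedMatrix.carrier, Finset.mem_union,
    Finset.mem_biUnion] at hmem
  rcases hmem with ⟨j, _, hj⟩ | h
  · rcases eq_or_ne j i with rfl | hne
    · rw [Function.update_self, Finset.mem_sdiff] at hj; exact hj.2 hgS
    · rw [Function.update_of_ne hne] at hj
      exact Finset.disjoint_left.mp (T.disjointG j i hne) hj hgG
  · exact Finset.disjoint_left.mp (T.disjointI i) hgG h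

lemma restrictI_carrier_subset (T : WovenBasedMatrix α H n) (S : Finset α) :
    (T.restrictI S).carrier ⊆ T.carrier :=
  fun _ ha => restrictI_carrier_mem ha

lemma restrictI_not_mem (T : WovenBasedMatrix α H n) (S : Finset α)
    {x : α} (hxS : x ∈ S) (hxI : x ∈ T.I) : x ∉ (T.restrictI S).carrier := by
  intro hmem
  simp only [WovenBasedMatrix.restrictI, WovenBasedMatrix.carrier, Finset.mem_union,
    Finset.mem_biUnion, Finset.mem_sdiff] at hmem
  rcases hmem with ⟨j, _, hj⟩ | ⟨_, hx⟩
  · exact Finset.disjoint_right.mp (T.disjointI j) hxI hj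
  · exact hx hxS

lemma carrier_eq_of_imoves {T T' : WovenBasedMatrix α H n}
    (h : Relation.ReflTransGen IMoveRel T T') : T'.carrier = T.carrier := by
  induction h with
  | refl => rfl
  | tail _ hstep ih =>
    obtain ⟨m, _, _, hG, hI, _, _⟩ := hstep
    rw [← ih]
    unfold WovenBasedMatrix.carrier
    rw [hG, hI]

lemma homologous_of_imoves {T T' : WovenBasedMatrix α H n}
    (h : Relation.ReflTransGen IMoveRel T T') : Homologous T T' :=
  Relation.ReflTransGen.mono (fun _ _ hs => Or.inr (Or.inr (Or.inl hs))) _ _ h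

lemma step_lemma (T : WovenBasedMatrix α H n) (h : ¬ Primitive T) :
    ∃ T'' : WovenBasedMatrix α H n,
      Homologous T T'' ∧ T''.carrier.card < T.carrier.card := by
  rw [Primitive] at h
  push_neg at h
  obtain ⟨T', hmoves, hnie⟩ := h
  have hcar : T'.carrier = T.carrier := carrier_eq_of_imoves hmoves
  have hhomTT' : Homologous T T' := homologous_of_imoves hmoves
  rw [NoInverseExtension, not_and_or, not_and_or, not_and_or] at hnie
  rcases hnie with h1 | h2 | h3 | h4
  · -- annihilating element: ExtRel1
    push_neg at h1
    obtain ⟨i, g, hgG, hgs, hann⟩ := h1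
    have hs : T'.s i ∉ ({g} : Finset α) := by
      simp only [Finset.mem_singleton]; exact fun he => hgs he.symm
    refine ⟨T'.restrictG i {g} hs, ?_, ?_⟩
    · refine hhomTT'.tail (Or.inr (Or.inl (Or.inl ?_)))
      refine ⟨i, g, restrictG_not_mem T' i {g} hs (Finset.mem_singleton_self g) hgG,
        rfl, rfl, ?_, ?_, fun _ _ _ _ => rfl, fun a ha => hann a ha⟩
      · show T'.G i = insert g (Function.update T'.G i (T'.G i \ {g}) i)
        rw [Function.update_self, Finset.sdiff_singleton_eq_erase, Finset.insert_erase hgG]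
      · intro i' hi'
        exact (Function.update_of_ne hi' _ _).symm
    · rw [← hcar]
      exact Finset.card_lt_card
        ⟨restrictG_carrier_subset T' i {g} hs, fun hsub =>
          restrictG_not_mem T' i {g} hs (Finset.mem_singleton_self g) hgG
            (hsub (Finset.mem_union.2 (Or.inl
              (Finset.mem_biUnion.2 ⟨i, Finset.mem_univ i, hgG⟩))))⟩
  · -- core element: ExtRel2
    push_neg at h2
    obtain ⟨i, g, hgG, hgs, hcore⟩ := h2
    have hs : T'.s i ∉ ({g} : Finset α) := by
      simp only [Finset.mem_singleton]; exact fun he => hgs he.symm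
    refine ⟨T'.restrictG i {g} hs, ?_, ?_⟩
    · refine hhomTT'.tail (Or.inr (Or.inl (Or.inr (Or.inl ?_))))
      refine ⟨i, g, restrictG_not_mem T' i {g} hs (Finset.mem_singleton_self g) hgG,
        rfl, rfl, ?_, ?_, fun _ _ _ _ => rfl, fun a ha => hcore a ha⟩
      · show T'.G i = insert g (Function.update T'.G i (T'.G i \ {g}) i)
        rw [Function.update_self, Finset.sdiff_singleton_eq_erase, Finset.insert_erase hgG]
      · intro i' hi'
        exact (Function.update_of_ne hi' _ _).symm
    · rw [← hcar]
      exact Finset.card_lt_card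
        ⟨restrictG_carrier_subset T' i {g} hs, fun hsub =>
          restrictG_not_mem T' i {g} hs (Finset.mem_singleton_self g) hgG
            (hsub (Finset.mem_union.2 (Or.inl
              (Finset.mem_biUnion.2 ⟨i, Finset.mem_univ i, hgG⟩))))⟩
  · -- complementary pair: ExtRel3
    push_neg at h3
    obtain ⟨i, g1, hg1G, g2, hg2G, hg1s, hg2s, hg12, hcompl⟩ := h3
    have hs : T'.s i ∉ ({g1, g2} : Finset α) := by
      simp only [Finset.mem_insert, Finset.mem_singleton]
      rintro (he | he)
      exacts [hg1s he.symm, hg2s he.symm]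
    refine ⟨T'.restrictG i {g1, g2} hs, ?_, ?_⟩
    · refine hhomTT'.tail (Or.inr (Or.inl (Or.inr (Or.inr (Or.inl ?_)))))
      refine ⟨i, g1, g2, hg12,
        restrictG_not_mem T' i {g1, g2} hs (by simp) hg1G,
        restrictG_not_mem T' i {g1, g2} hs (by simp) hg2G,
        rfl, rfl, ?_, ?_, fun _ _ _ _ => rfl, fun a ha => hcompl a ha⟩
      · show T'.G i = insert g1 (insert g2 (Function.update T'.G i (T'.G i \ {g1, g2}) i))
        rw [Function.update_self]
        ext x
        simp only [Finset.mem_insert, Finset.mem_sdiff, Finset.mem_insert,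
          Finset.mem_singleton]
        constructor
        · intro hx
          by_cases h1 : x = g1
          · exact Or.inl h1
          by_cases h2 : x = g2
          · exact Or.inr (Or.inl h2)
          · exact Or.inr (Or.inr ⟨hx, by tauto⟩)
        · rintro (rfl | rfl | ⟨hx, _⟩)
          exacts [hg1G, hg2G, hx]
      · intro i' hi'
        exact (Function.update_of_ne hi' _ _).symm
    · rw [← hcar]
      exact Finset.card_lt_card
        ⟨restrictG_carrier_subset T' i {g1, g2} hs, fun hsub =>
          restrictG_not_mem T' i {g1, g2} hs (by simp) hg1G
            (hsub (Finset.mem_union.2 (Or.inl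
              (Finset.mem_biUnion.2 ⟨i, Finset.mem_univ i, hg1G⟩))))⟩
  · -- sum-annihilating pair: ExtRel4
    push_neg at h4
    obtain ⟨x1, hx1, x2, hx2, hx12, hann⟩ := h4
    refine ⟨T'.restrictI {x1, x2}, ?_, ?_⟩
    · refine hhomTT'.tail (Or.inr (Or.inl (Or.inr (Or.inr (Or.inr ?_)))))
      refine ⟨x1, x2, hx12,
        restrictI_not_mem T' {x1, x2} (by simp) hx1,
        restrictI_not_mem T' {x1, x2} (by simp) hx2,
        rfl, rfl, ?_, fun _ _ _ _ => rfl, fun a ha => hann a ha⟩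
      show T'.I = insert x1 (insert x2 (T'.I \ {x1, x2}))
      ext x
      simp only [Finset.mem_insert, Finset.mem_sdiff, Finset.mem_insert,
        Finset.mem_singleton]
      constructor
      · intro hx
        by_cases h1 : x = x1
        · exact Or.inl h1
        by_cases h2 : x = x2
        · exact Or.inr (Or.inl h2)
        · exact Or.inr (Or.inr ⟨hx, by tauto⟩)
      · rintro (rfl | rfl | ⟨hx, _⟩)
        exacts [hx1, hx2, hx]
    · rw [← hcar]
      exact Finset.card_lt_card
        ⟨restrictI_carrier_subset T' {x1, x2}, fun hsub =>
          restrictI_not_mem T' {x1, x2} (by simp) hx1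
            (hsub (Finset.mem_union.2 (Or.inr hx1)))⟩

end Aux

/-- every woven based matrix is homologous to a primitive woven based
matrix. -/
theorem exists_primitive_homologous
    {α : Type u} {H : Type v} [DecidableEq α] [AddCommGroup H] {n : ℕ}
    (T : WovenBasedMatrix α H n) :
    ∃ Tp : WovenBasedMatrix α H n, Homologous T Tp ∧ Primitive Tp := by
  have main : ∀ (N : ℕ) (T : WovenBasedMatrix α H n), T.carrier.card ≤ N →
      ∃ Tp : WovenBasedMatrix α H n, Homologous T Tp ∧ Primitive Tp := by
    intro N
    induction N with
    | zero =>
      intro T hT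
      by_cases hp : Primitive T
      · exact ⟨T, Relation.ReflTransGen.refl, hp⟩
      · obtain ⟨T'', _, hlt⟩ := step_lemma T hp
        omega
    | succ N ih =>
      intro T hT
      by_cases hp : Primitive T
      · exact ⟨T, Relation.ReflTransGen.refl, hp⟩
      · obtain ⟨T'', hhom, hlt⟩ := step_lemma T hp
        obtain ⟨Tp, h1, h2⟩ := ih T'' (by omega)
        exact ⟨Tp, hhom.trans h1, h2⟩
  exact main T.carrier.card T le_rfl
end
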